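/- arXiv:2106.12846 — 13 statements merged into one kernel-verified Lean document; each statement's English description precedes it below -/
import Mathlib

section
/- Let α be a nonempty finite alphabet. Then the algebra of (possibly empty) binary trees with leaves labeled in α, i.e. the free magma FreeMagma (Option α), is affine complete: for every n and every congruence preserving function f : (Fin n → FreeMagma (Option α)) → FreeMagma (Option α) there exists P ∈ FreeMagma (Option α ⊕ Fin n) such that for all u, f u equals the image of P under the magma homomorphism sending Sum.inl c to FreeMagma.of c and Sum.inr i to u i. -/
namespace AC

variable {β : Type*}

lemma len_mul (x y : FreeMagma β) : (x * y).length = x.length + y.length := rfl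
lemma len_of (c : β) : (FreeMagma.of c).length = 1 := rfl

lemma mul_inj {x y x' y' : FreeMagma β} (h : x * y = x' * y') : x = x' ∧ y = y' := by
  rw [← FreeMagma.mul_eq, ← FreeMagma.mul_eq] at h
  injection h with h1 h2
  exact ⟨h1, h2⟩

lemma mul_ne_of (x y : FreeMagma β) (c : β) : x * y ≠ FreeMagma.of c := by
  intro h
  have := congrArg FreeMagma.length h
  rw [len_mul, len_of] at this
  have := x.length_pos
  have := y.length_pos
  omega

inductive Sub : FreeMagma β → FreeMagma β → Prop
  | refl (t : FreeMagma β) : Sub t t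
  | left {s x : FreeMagma β} (y : FreeMagma β) : Sub s x → Sub s (x * y)
  | right (x : FreeMagma β) {s y : FreeMagma β} : Sub s y → Sub s (x * y)

lemma sub_of {s : FreeMagma β} {c : β} (h : Sub s (FreeMagma.of c)) : s = FreeMagma.of c := by
  cases h
  rfl

lemma sub_mul {s x y : FreeMagma β} (h : Sub s (x * y)) : s = x * y ∨ Sub s x ∨ Sub s y := by
  cases h with
  | refl => exact Or.inl rfl
  | left _ h => exact Or.inr (Or.inl h)
  | right _ h => exact Or.inr (Or.inr h)

lemma Sub.le_len {s t : FreeMagma β} (h : Sub s t) : s.length ≤ t.length := by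
  induction h with
  | refl => exact le_refl _
  | left y _ ih => rw [len_mul]; omega
  | right x _ ih => rw [len_mul]; have := x.length_pos; omega

section Machine

variable (a b : β) {n : ℕ}

/-- left comb of `a`s with `k+1` leaves -/
def comb : ℕ → FreeMagma β
  | 0 => FreeMagma.of a
  | k + 1 => comb k * FreeMagma.of a

lemma len_comb (k : ℕ) : (comb a k).length = k + 1 := by
  induction k with
  | zero => rfl
  | succ k ih => rw [comb, len_mul, ih, len_of]

/-- the generic trees -/
def gg (m : ℕ) (i : Fin n) : FreeMagma β := comb a (m + (i : ℕ) + 2) * FreeMagma.of b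

lemma len_gg (m : ℕ) (i : Fin n) : (gg a b m i).length = m + (i : ℕ) + 4 := by
  rw [gg, len_mul, len_comb, len_of]

lemma gg_inj {m : ℕ} {i j : Fin n} (h : gg a b m i = gg a b m j) : i = j := by
  have := congrArg FreeMagma.length h
  rw [len_gg, len_gg] at this
  exact Fin.ext (by omega)

variable {a b}

lemma not_sub_gg_comb (hab : a ≠ b) {m : ℕ} {i : Fin n} (k : ℕ) :
    ¬ Sub (gg a b m i) (comb a k) := by
  induction k with
  | zero =>
    intro h
    have h2 := sub_of h
    exact mul_ne_of _ _ _ h2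
  | succ k ih =>
    intro h
    rw [comb] at h
    rcases sub_mul h with h | h | h
    · rw [gg] at h
      have h2 := (mul_inj h).2
      injection h2 with h3
      exact hab h3.symm
    · exact ih h
    · have h2 := sub_of h
      exact mul_ne_of _ _ _ h2

lemma antichain (hab : a ≠ b) {m m' : ℕ} {i j : Fin n}
    (h : Sub (gg a b m i) (gg a b m' j)) : m + (i : ℕ) = m' + (j : ℕ) := by
  rw [show gg a b m' j = comb a (m' + (j:ℕ) + 2) * FreeMagma.of b from rfl] at h
  rcases sub_mul h with h | h | h
  · have := congrArg FreeMagma.length h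
    rw [len_gg, len_mul, len_comb, len_of] at this
    omega
  · exact absurd h (not_sub_gg_comb hab _)
  · have h2 := sub_of h
    exact absurd h2 (mul_ne_of _ _ _)


variable (a b) (u : Fin n → FreeMagma β) (m : ℕ)

open Classical in
noncomputable def combine (x y : FreeMagma β) : FreeMagma β :=
  if h : ∃ i : Fin n, x * y = gg a b m i then u h.choose else x * y

lemma combine_pos {x y : FreeMagma β} {i : Fin n} (h : x * y = gg a b m i) :
    combine a b u m x y = u i := by
  rw [combine, dif_pos ⟨i, h⟩]
  have hs := (⟨i, h⟩ : ∃ i : Fin n, x * y = gg a b m i).choose_spec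
  exact (congrArg u (gg_inj a b (h.symm.trans hs))).symm

lemma combine_neg {x y : FreeMagma β} (h : ∀ i : Fin n, x * y ≠ gg a b m i) :
    combine a b u m x y = x * y := by
  rw [combine, dif_neg]
  rintro ⟨i, hi⟩
  exact h i hi

noncomputable def phi : FreeMagma β → FreeMagma β
  | .of c => .of c
  | .mul x y => combine a b u m (phi x) (phi y)

lemma phi_of (c : β) : phi a b u m (FreeMagma.of c) = FreeMagma.of c := rfl

lemma phi_mul (x y : FreeMagma β) :
    phi a b u m (x * y) = combine a b u m (phi a b u m x) (phi a b u m y) := rfl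

lemma phi_comb (hab : a ≠ b) (k : ℕ) : phi a b u m (comb a k) = comb a k := by
  induction k with
  | zero => rfl
  | succ k ih =>
    rw [comb, phi_mul, ih, phi_of, combine_neg]
    intro i h
    rw [gg] at h
    have h2 := (mul_inj h).2
    injection h2 with h3
    exact hab h3

lemma phi_gg (hab : a ≠ b) (i : Fin n) : phi a b u m (gg a b m i) = u i := by
  rw [show gg a b m i = comb a (m + (i:ℕ) + 2) * FreeMagma.of b from rfl, phi_mul,
    phi_comb a b u m hab, phi_of]
  exact combine_pos a b u m rfl

lemma phi_norm {t : FreeMagma β} (h : ∀ i : Fin n, ¬ Sub (gg a b m i) t) :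
    phi a b u m t = t := by
  induction t with
  | ih1 c => rfl
  | ih2 x y ihx ihy =>
    rw [phi_mul, ihx (fun i hi => h i (Sub.left _ hi)), ihy (fun i hi => h i (Sub.right _ hi))]
    exact combine_neg a b u m (fun i hi => h i (hi ▸ Sub.refl _))

/-- the kernel of `phi` is a congruence -/
noncomputable def conPhi : Con (FreeMagma β) where
  r x y := phi a b u m x = phi a b u m y
  iseqv := ⟨fun _ => rfl, Eq.symm, Eq.trans⟩
  mul' {w x y z} h1 h2 := by
    show phi a b u m _ = phi a b u m _
    rw [phi_mul, phi_mul]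
    show combine a b u m (phi a b u m w) (phi a b u m y) = _
    rw [h1, h2]

end Machine

section Poly

variable {β : Type*}

/-- evaluation of a polynomial -/
def psi {n : ℕ} (v : Fin n → FreeMagma β) : FreeMagma (β ⊕ Fin n) →ₙ* FreeMagma β :=
  FreeMagma.lift (Sum.elim FreeMagma.of v)

lemma psi_inl {n : ℕ} (v : Fin n → FreeMagma β) (c : β) :
    psi v (FreeMagma.of (Sum.inl c)) = FreeMagma.of c := rfl

lemma psi_inr {n : ℕ} (v : Fin n → FreeMagma β) (i : Fin n) :
    psi v (FreeMagma.of (Sum.inr i)) = v i := rfl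

lemma psi_mul {n : ℕ} (v : Fin n → FreeMagma β) (x y : FreeMagma (β ⊕ Fin n)) :
    psi v (x * y) = psi v x * psi v y := map_mul _ _ _

lemma psi_map {n : ℕ} (v : Fin n → FreeMagma β) (t : FreeMagma β) :
    psi v (FreeMagma.map Sum.inl t) = t := by
  induction t with
  | ih1 c => rfl
  | ih2 x y ihx ihy => rw [map_mul, psi_mul, ihx, ihy]

lemma len_map {n : ℕ} (t : FreeMagma β) :
    (FreeMagma.map (Sum.inl : β → β ⊕ Fin n) t).length = t.length := by
  induction t with
  | ih1 c => rfl
  | ih2 x y ihx ihy => rw [map_mul, len_mul, len_mul, ihx, ihy]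

open Classical in
/-- extraction of the canonical polynomial -/
noncomputable def gen (a b : β) (n m : ℕ) : FreeMagma β → FreeMagma (β ⊕ Fin n)
  | .of c => FreeMagma.of (Sum.inl c)
  | .mul x y =>
    if h : ∃ i : Fin n, x * y = gg a b m i then FreeMagma.of (Sum.inr h.choose)
    else gen a b n m x * gen a b n m y

variable (a b : β) (n m : ℕ)

lemma gen_of (c : β) : gen a b n m (FreeMagma.of c) = FreeMagma.of (Sum.inl c) := rfl

open Classical in
lemma gen_mul_pos {x y : FreeMagma β} {i : Fin n} (h : x * y = gg a b m i) :
    gen a b n m (x * y) = FreeMagma.of (Sum.inr i) := by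
  show (if h : ∃ i : Fin n, x * y = gg a b m i then FreeMagma.of (Sum.inr h.choose)
    else gen a b n m x * gen a b n m y) = _
  rw [dif_pos ⟨i, h⟩]
  have hs := (⟨i, h⟩ : ∃ i : Fin n, x * y = gg a b m i).choose_spec
  rw [gg_inj a b (h.symm.trans hs).symm]

open Classical in
lemma gen_mul_neg {x y : FreeMagma β} (h : ∀ i : Fin n, x * y ≠ gg a b m i) :
    gen a b n m (x * y) = gen a b n m x * gen a b n m y := by
  show (if h : ∃ i : Fin n, x * y = gg a b m i then FreeMagma.of (Sum.inr h.choose)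
    else gen a b n m x * gen a b n m y) = _
  rw [dif_neg]
  rintro ⟨i, hi⟩
  exact h i hi

lemma psi_gen (t : FreeMagma β) :
    psi (fun i : Fin n => gg a b m i) (gen a b n m t) = t := by
  induction t with
  | ih1 c => rfl
  | ih2 x y ihx ihy =>
    by_cases h : ∃ i : Fin n, x * y = gg a b m i
    · obtain ⟨i, hi⟩ := h
      rw [gen_mul_pos a b n m hi, psi_inr, hi]
    · push_neg at h
      rw [gen_mul_neg a b n m h, psi_mul, ihx, ihy]

lemma gen_eq_map {t R : FreeMagma β}
    (h : gen a b n m t = FreeMagma.map Sum.inl R) : t = R := by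
  induction t generalizing R with
  | ih1 c =>
    rw [gen_of] at h
    cases R with
    | of r =>
      rw [FreeMagma.map_of] at h
      injection h with h1
      injection h1 with h2
      rw [h2]
    | mul r1 r2 =>
      rw [FreeMagma.mul_eq, map_mul] at h
      exact absurd h.symm (mul_ne_of _ _ _)
  | ih2 x y ihx ihy =>
    by_cases hc : ∃ i : Fin n, x * y = gg a b m i
    · obtain ⟨i, hi⟩ := hc
      rw [gen_mul_pos a b n m hi] at h
      cases R with
      | of r =>
        rw [FreeMagma.map_of] at h
        injection h with h1
        exact absurd h1 (by simp)
      | mul r1 r2 =>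
        rw [FreeMagma.mul_eq, map_mul] at h
        exact absurd h.symm (mul_ne_of _ _ _)
    · push_neg at hc
      rw [gen_mul_neg a b n m hc] at h
      cases R with
      | of r =>
        rw [FreeMagma.map_of] at h
        exact absurd h (mul_ne_of _ _ _)
      | mul r1 r2 =>
        rw [FreeMagma.mul_eq, map_mul] at h
        obtain ⟨h1, h2⟩ := mul_inj h
        rw [FreeMagma.mul_eq, ihx h1, ihy h2]

variable {a b}

lemma sub_gen (hab : a ≠ b) (i : Fin n) (t : FreeMagma β) :
    ¬ Sub (FreeMagma.map Sum.inl (gg a b m i)) (gen a b n m t) := by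
  induction t with
  | ih1 c =>
    intro h
    rw [gen_of] at h
    have h2 := sub_of h
    have := congrArg FreeMagma.length h2
    rw [len_map, len_gg, len_of] at this
    omega
  | ih2 x y ihx ihy =>
    intro h
    by_cases hc : ∃ j : Fin n, x * y = gg a b m j
    · obtain ⟨j, hj⟩ := hc
      rw [gen_mul_pos a b n m hj] at h
      have h2 := sub_of h
      have := congrArg FreeMagma.length h2
      rw [len_map, len_gg, len_of] at this
      omega
    · push_neg at hc
      rw [gen_mul_neg a b n m hc] at h
      rcases sub_mul h with h | h | h
      · rw [show gg a b m i = comb a (m + (i:ℕ) + 2) * FreeMagma.of b from rfl, map_mul] at h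
        obtain ⟨h1, h2⟩ := mul_inj h
        exact hc i (by rw [gen_eq_map a b n m h1.symm, gen_eq_map a b n m h2.symm]; rfl)
      · exact ihx h
      · exact ihy h

lemma no_inr_map {n : ℕ} {Q : FreeMagma (β ⊕ Fin n)}
    (h : ∀ j : Fin n, ¬ Sub (FreeMagma.of (Sum.inr j)) Q) :
    ∃ R : FreeMagma β, Q = FreeMagma.map Sum.inl R := by
  induction Q with
  | ih1 s =>
    cases s with
    | inl c => exact ⟨FreeMagma.of c, rfl⟩
    | inr j => exact absurd (Sub.refl _) (h j)
  | ih2 x y ihx ihy =>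
    obtain ⟨R1, h1⟩ := ihx (fun j hj => h j (Sub.left _ hj))
    obtain ⟨R2, h2⟩ := ihy (fun j hj => h j (Sub.right _ hj))
    exact ⟨R1 * R2, by rw [h1, h2, map_mul]⟩

lemma sub_psi_of {n : ℕ} {v : Fin n → FreeMagma β} {s : β ⊕ Fin n} {Q : FreeMagma (β ⊕ Fin n)}
    (h : Sub (FreeMagma.of s) Q) : Sub (Sum.elim FreeMagma.of v s) (psi v Q) := by
  induction Q with
  | ih1 c =>
    have h2 := sub_of h
    injection h2 with h3
    rw [h3]
    exact Sub.refl _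
  | ih2 x y ihx ihy =>
    rw [psi_mul]
    rcases sub_mul h with h | h | h
    · exact absurd h.symm (mul_ne_of _ _ _)
    · exact Sub.left _ (ihx h)
    · exact Sub.right _ (ihy h)

lemma sub_psi {n : ℕ} {v : Fin n → FreeMagma β} {s : FreeMagma β} {Q : FreeMagma (β ⊕ Fin n)}
    (h : Sub s (psi v Q)) :
    (∃ c, Sub (FreeMagma.of c) Q ∧ Sub s (Sum.elim FreeMagma.of v c)) ∨
    (∃ Q', Sub Q' Q ∧ s = psi v Q') := by
  induction Q with
  | ih1 c => exact Or.inl ⟨c, Sub.refl _, h⟩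
  | ih2 x y ihx ihy =>
    rw [psi_mul] at h
    rcases sub_mul h with h | h | h
    · exact Or.inr ⟨x * y, Sub.refl _, by rw [h, psi_mul]⟩
    · rcases ihx h with ⟨c, h1, h2⟩ | ⟨Q', h1, h2⟩
      · exact Or.inl ⟨c, Sub.left _ h1, h2⟩
      · exact Or.inr ⟨Q', Sub.left _ h1, h2⟩
    · rcases ihy h with ⟨c, h1, h2⟩ | ⟨Q', h1, h2⟩
      · exact Or.inl ⟨c, Sub.right _ h1, h2⟩
      · exact Or.inr ⟨Q', Sub.right _ h1, h2⟩

end Poly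

section Counts

variable {β : Type*} {n : ℕ}

/-- number of letter leaves -/
def ell : FreeMagma (β ⊕ Fin n) → ℕ
  | .of (Sum.inl _) => 1
  | .of (Sum.inr _) => 0
  | .mul x y => ell x + ell y

/-- number of occurrences of each variable -/
def kc : FreeMagma (β ⊕ Fin n) → Fin n → ℕ
  | .of (Sum.inl _) => fun _ => 0
  | .of (Sum.inr i) => fun j => if j = i then 1 else 0
  | .mul x y => fun j => kc x j + kc y j

lemma ell_inl (c : β) : ell (n := n) (FreeMagma.of (Sum.inl c)) = 1 := rfl
lemma ell_inr (i : Fin n) : ell (β := β) (FreeMagma.of (Sum.inr i)) = 0 := rfl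
lemma ell_mul (x y : FreeMagma (β ⊕ Fin n)) : ell (x * y) = ell x + ell y := rfl
lemma kc_inl (c : β) (j : Fin n) : kc (FreeMagma.of (Sum.inl c)) j = 0 := rfl
lemma kc_inr (i j : Fin n) :
    kc (β := β) (FreeMagma.of (Sum.inr i)) j = if j = i then 1 else 0 := rfl
lemma kc_mul (x y : FreeMagma (β ⊕ Fin n)) (j : Fin n) : kc (x * y) j = kc x j + kc y j := rfl

lemma len_psi (v : Fin n → FreeMagma β) (Q : FreeMagma (β ⊕ Fin n)) :
    (psi v Q).length = ell Q + ∑ i, kc Q i * (v i).length := by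
  induction Q with
  | ih1 s =>
    cases s with
    | inl c => simp [psi_inl, len_of, ell_inl, kc_inl]
    | inr i =>
      rw [psi_inr, ell_inr]
      simp [kc_inr, ite_mul, Finset.sum_ite_eq']
  | ih2 x y ihx ihy =>
    rw [psi_mul, len_mul, ihx, ihy, ell_mul]
    simp only [kc_mul, add_mul, Finset.sum_add_distrib]
    omega

lemma len_ell_kc (Q : FreeMagma (β ⊕ Fin n)) : Q.length = ell Q + ∑ i, kc Q i := by
  induction Q with
  | ih1 s =>
    cases s with
    | inl c => simp [len_of, ell_inl, kc_inl]
    | inr i =>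
      rw [len_of, ell_inr]
      simp [kc_inr]
  | ih2 x y ihx ihy =>
    rw [len_mul, ihx, ihy, ell_mul]
    simp only [kc_mul, Finset.sum_add_distrib]
    omega

end Counts

section Key

variable {β : Type*} {a b : β} {n : ℕ} (m : ℕ)

/-- injectivity of evaluation at the generic point, for small polynomials -/
lemma gen_psi (hab : a ≠ b) {Q : FreeMagma (β ⊕ Fin n)} (hsz : Q.length < m + 4) :
    gen a b n m (psi (fun i : Fin n => gg a b m i) Q) = Q := by
  induction Q with
  | ih1 s =>
    cases s with
    | inl c => rw [psi_inl, gen_of]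
    | inr i =>
      rw [psi_inr]
      rw [show gg a b m i = comb a (m + (i:ℕ) + 2) * FreeMagma.of b from rfl]
      rw [gen_mul_pos a b n m rfl]
  | ih2 x y ihx ihy =>
    rw [psi_mul]
    have hx : x.length < m + 4 := by
      rw [len_mul] at hsz; have := y.length_pos; omega
    have hy : y.length < m + 4 := by
      rw [len_mul] at hsz; have := x.length_pos; omega
    have hno : ∀ i : Fin n,
        psi (fun i : Fin n => gg a b m i) x * psi (fun i : Fin n => gg a b m i) y
          ≠ gg a b m i := by
      intro i hi
      rw [← psi_mul] at hi
      by_cases hv : ∀ j : Fin n, ¬ Sub (FreeMagma.of (Sum.inr j)) (x * y)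
      · obtain ⟨R, hR⟩ := no_inr_map hv
        rw [hR, psi_map] at hi
        have h2 := congrArg FreeMagma.length hi
        rw [len_gg] at h2
        have h3 := congrArg FreeMagma.length hR
        rw [len_map] at h3
        omega
      · push_neg at hv
        obtain ⟨j, hj⟩ := hv
        have hsub := sub_psi_of (v := fun i : Fin n => gg a b m i) hj
        rw [hi] at hsub
        simp only [Sum.elim_inr] at hsub
        have hji := antichain hab hsub
        have hj2 : j = i := Fin.ext (by omega)
        subst hj2
        have h2 := congrArg FreeMagma.length hi
        rw [psi_mul, len_mul, len_gg] at h2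
        rcases sub_mul hj with he | he | he
        · exact absurd he.symm (mul_ne_of _ _ _)
        · have h1 := (sub_psi_of (v := fun i : Fin n => gg a b m i) he).le_len
          simp only [Sum.elim_inr] at h1
          rw [len_gg] at h1
          have := (psi (fun i : Fin n => gg a b m i) y).length_pos
          omega
        · have h1 := (sub_psi_of (v := fun i : Fin n => gg a b m i) he).le_len
          simp only [Sum.elim_inr] at h1
          rw [len_gg] at h1
          have := (psi (fun i : Fin n => gg a b m i) x).length_pos
          omega
    rw [gen_mul_neg a b n m hno, ihx hx, ihy hy]

/-- evaluation of phi on substituted polynomials -/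
lemma phi_psi (hab : a ≠ b) (u : Fin n → FreeMagma β) {P : FreeMagma (β ⊕ Fin n)}
    (hc : ∀ i : Fin n, ¬ Sub (gg a b m i) (psi u P)) :
    phi a b u m (psi (fun i : Fin n => gg a b m i) P) = psi u P := by
  induction P with
  | ih1 s =>
    cases s with
    | inl c => rw [psi_inl, psi_inl, phi_of]
    | inr i => rw [psi_inr, psi_inr, phi_gg a b u m hab]
  | ih2 x y ihx ihy =>
    rw [psi_mul, psi_mul, phi_mul,
      ihx (fun i hi => hc i (by rw [psi_mul]; exact Sub.left _ hi)),
      ihy (fun i hi => hc i (by rw [psi_mul]; exact Sub.right _ hi))]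
    exact combine_neg a b u m
      (fun i hi => hc i (by rw [psi_mul, hi]; exact Sub.refl _))

end Key

section Main

variable {β : Type*} (a b : β) (n : ℕ) (f : (Fin n → FreeMagma β) → FreeMagma β)

/-- the generic tuple -/
def gt (m : ℕ) : Fin n → FreeMagma β := fun i => gg a b m i

lemma gt_apply (m : ℕ) (i : Fin n) : gt a b n m i = gg a b m i := rfl

/-- the candidate polynomial at scale `m` -/
noncomputable def Pm (m : ℕ) : FreeMagma (β ⊕ Fin n) := gen a b n m (f (gt a b n m))

lemma Pm_def (m : ℕ) : Pm a b n f m = gen a b n m (f (gt a b n m)) := rfl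

variable {a b n f}
variable (hab : a ≠ b)
variable (hf : ∀ c : Con (FreeMagma β), ∀ u v : Fin n → FreeMagma β,
  (∀ i, c (u i) (v i)) → c (f u) (f v))

lemma len_psi_le {v : Fin n → FreeMagma β} {Q : FreeMagma (β ⊕ Fin n)} {B : ℕ}
    (hB : ∀ j, (v j).length ≤ B) : (psi v Q).length ≤ Q.length * (B + 1) := by
  rw [len_psi, len_ell_kc]
  have h1 : ∑ i, kc Q i * (v i).length ≤ (∑ i, kc Q i) * B := by
    rw [Finset.sum_mul]
    exact Finset.sum_le_sum (fun i _ => Nat.mul_le_mul_left _ (hB i))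
  have h2 : ell Q ≤ ell Q * (B + 1) := Nat.le_mul_of_pos_right _ (Nat.succ_pos B)
  have h3 : (∑ i, kc Q i) * B ≤ (∑ i, kc Q i) * (B + 1) :=
    Nat.mul_le_mul_left _ (Nat.le_succ B)
  calc ell Q + ∑ i, kc Q i * (v i).length
      ≤ ell Q * (B + 1) + (∑ i, kc Q i) * (B + 1) := by omega
    _ = (ell Q + ∑ i, kc Q i) * (B + 1) := (Nat.add_mul _ _ _).symm

include hab hf in
lemma core (u : Fin n → FreeMagma β) (m : ℕ)
    (ha : ∀ (i : Fin n) (j : Fin n), ¬ Sub (gg a b m i) (u j))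
    (hb : ∀ i : Fin n, ¬ Sub (gg a b m i) (f u))
    (hc : ∀ i : Fin n, ¬ Sub (gg a b m i) (psi u (Pm a b n f m))) :
    f u = psi u (Pm a b n f m) := by
  have key : conPhi a b u m (f u) (f (gt a b n m)) := by
    refine hf _ u (gt a b n m) (fun i => ?_)
    show phi a b u m (u i) = phi a b u m (gt a b n m i)
    rw [phi_norm a b u m (fun j hj => ha j i hj), gt_apply, phi_gg a b u m hab]
  have key2 : phi a b u m (f u) = phi a b u m (f (gt a b n m)) := key
  rw [phi_norm a b u m hb] at key2
  rw [key2, Pm_def]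
  conv_lhs => rw [← psi_gen a b n m (f (gt a b n m))]
  exact phi_psi m hab u (fun i hi => hc i (by rwa [Pm_def]))

include hab hf in
lemma star (m' m : ℕ) (h1 : m' + n < m) (h2 : (f (gt a b n m')).length < m + 4) :
    f (gt a b n m') = psi (gt a b n m') (Pm a b n f m) := by
  refine core hab hf (gt a b n m') m ?_ ?_ ?_
  · intro i j h
    rw [gt_apply] at h
    have := antichain hab h
    have := j.isLt
    omega
  · intro i h
    have := h.le_len
    rw [len_gg] at this
    omega
  · intro i h
    rcases sub_psi h with ⟨c, hcQ, hs⟩ | ⟨Q', hQ', hs⟩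
    · cases c with
      | inl s =>
        simp only [Sum.elim_inl] at hs
        exact absurd (sub_of hs) (mul_ne_of _ _ _)
      | inr j =>
        simp only [Sum.elim_inr, gt_apply] at hs
        have := antichain hab hs
        have := j.isLt
        omega
    · by_cases hv : ∀ j : Fin n, ¬ Sub (FreeMagma.of (Sum.inr j)) Q'
      · obtain ⟨R, hR⟩ := no_inr_map hv
        rw [hR, psi_map] at hs
        rw [hR, ← hs, Pm_def] at hQ'
        exact sub_gen n m hab i (f (gt a b n m)) hQ'
      · push_neg at hv
        obtain ⟨j, hj⟩ := hv
        have hsub := sub_psi_of (v := gt a b n m') hj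
        rw [← hs] at hsub
        simp only [Sum.elim_inr, gt_apply] at hsub
        have := antichain hab hsub
        have := j.isLt
        omega

include hab hf in
lemma pm_len_le (m : ℕ) (h1 : 1 + n < m)
    (hs0 : (f (gt a b n 0)).length < m + 4) (hs1 : (f (gt a b n 1)).length < m + 4) :
    (Pm a b n f m).length ≤ (f (gt a b n 0)).length + (f (gt a b n 1)).length := by
  have e0 := congrArg FreeMagma.length (star hab hf 0 m (by omega) hs0)
  have e1 := congrArg FreeMagma.length (star hab hf 1 m (by omega) hs1)
  rw [len_psi] at e0 e1
  have c0 : ∀ i : Fin n, (gt a b n 0 i).length = (i : ℕ) + 4 := fun i => by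
    rw [gt_apply, len_gg]; omega
  have c1 : ∀ i : Fin n, (gt a b n 1 i).length = (i : ℕ) + 5 := fun i => by
    rw [gt_apply, len_gg]; omega
  rw [Finset.sum_congr rfl (fun i _ => by rw [c0 i])] at e0
  rw [Finset.sum_congr rfl (fun i _ => by rw [c1 i])] at e1
  have hsplit : ∑ i : Fin n, kc (Pm a b n f m) i * ((i : ℕ) + 5)
      = (∑ i : Fin n, kc (Pm a b n f m) i * ((i : ℕ) + 4))
        + ∑ i : Fin n, kc (Pm a b n f m) i := by
    rw [← Finset.sum_add_distrib]
    exact Finset.sum_congr rfl (fun i _ => by ring)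
  have lp := len_ell_kc (Pm a b n f m)
  omega

include hab hf in
lemma pm_stab (m1 m2 : ℕ) (hC : (Pm a b n f m2).length < m1 + 4)
    (h1 : m1 + n < m2) (h2 : (f (gt a b n m1)).length < m2 + 4) :
    Pm a b n f m1 = Pm a b n f m2 := by
  have hstar := star hab hf m1 m2 h1 h2
  rw [Pm_def, hstar]
  exact gen_psi m1 hab hC

include hab hf in
/-- the main abstract theorem -/
theorem main_abstract : ∃ P : FreeMagma (β ⊕ Fin n), ∀ u : Fin n → FreeMagma β,
    f u = psi u P := by
  classical
  set s0 := (f (gt a b n 0)).length with hs0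
  set s1 := (f (gt a b n 1)).length with hs1
  set C := s0 + s1 with hC
  set M1 := C + n + 2 with hM1
  have hCpos : 0 < C := by
    have := (f (gt a b n 0)).length_pos
    omega
  -- all large scales with suitable conditions have the same polynomial
  have hbound : ∀ m : ℕ, M1 ≤ m → (Pm a b n f m).length ≤ C := by
    intro m hm
    exact pm_len_le hab hf m (by omega) (by omega) (by omega)
  have hstab : ∀ m : ℕ, M1 ≤ m → Pm a b n f m = Pm a b n f M1 := by
    intro m hm
    set m3 := (f (gt a b n m)).length + (f (gt a b n M1)).length + m + M1 + n + 5 with hm3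
    have hb3 : (Pm a b n f m3).length ≤ C := hbound m3 (by omega)
    have e1 : Pm a b n f m = Pm a b n f m3 :=
      pm_stab hab hf m m3 (by omega) (by omega) (by omega)
    have e2 : Pm a b n f M1 = Pm a b n f m3 :=
      pm_stab hab hf M1 m3 (by omega) (by omega) (by omega)
    rw [e1, e2]
  refine ⟨Pm a b n f M1, fun u => ?_⟩
  set Bu := (Finset.univ.sup fun j : Fin n => (u j).length) + (f u).length + 1 with hBu
  have hub : ∀ j, (u j).length ≤ Bu := fun j => by
    have h2 : (u j).length ≤ Finset.univ.sup (fun j : Fin n => (u j).length) :=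
      Finset.le_sup (f := fun j : Fin n => (u j).length) (Finset.mem_univ j)
    omega
  have hfu : (f u).length ≤ Bu := by omega
  set m := M1 + Bu + C * (Bu + 1) + n + 5 with hm
  have hmM1 : M1 ≤ m := by omega
  have step : f u = psi u (Pm a b n f m) := by
    refine core hab hf u m ?_ ?_ ?_
    · intro i j h
      have := h.le_len
      rw [len_gg] at this
      have := hub j
      omega
    · intro i h
      have := h.le_len
      rw [len_gg] at this
      omega
    · intro i h
      have hlen := h.le_len
      rw [len_gg] at hlen
      have hle : (psi u (Pm a b n f m)).length ≤ (Pm a b n f m).length * (Bu + 1) :=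
        len_psi_le hub
      have hPC : (Pm a b n f m).length ≤ C := hbound m hmM1
      have : (Pm a b n f m).length * (Bu + 1) ≤ C * (Bu + 1) :=
        Nat.mul_le_mul_right _ hPC
      omega
  rw [step, hstab m hmM1]

end Main

end AC

/-- `f` is congruence preserving on the algebra of binary trees with leaves labeled
in `Option α` (the free magma). -/
def IsTreeCP {α : Type*} {n : ℕ}
    (f : (Fin n → FreeMagma (Option α)) → FreeMagma (Option α)) : Prop :=
  ∀ c : Con (FreeMagma (Option α)), ∀ u v : Fin n → FreeMagma (Option α),
    (∀ i, c (u i) (v i)) → c (f u) (f v)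

/-- The algebra of (possibly empty) binary trees with leaves labeled in a nonempty
finite alphabet is affine complete. -/
theorem freeMagma_affineComplete {α : Type*} [Fintype α] [Nonempty α]
    (n : ℕ) (f : (Fin n → FreeMagma (Option α)) → FreeMagma (Option α)) (hf : IsTreeCP f) :
    ∃ P : FreeMagma (Option α ⊕ Fin n), ∀ u : Fin n → FreeMagma (Option α),
      f u = FreeMagma.lift (Sum.elim FreeMagma.of u) P := by
  obtain ⟨x⟩ := ‹Nonempty α›
  have hab : (none : Option α) ≠ some x := by simp
  obtain ⟨P, hP⟩ := AC.main_abstract hab hf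
  exact ⟨P, fun u => hP u⟩
end

section
/- Let f : (Fin n → FreeMonoid α) → FreeMonoid α be congruence preserving and let a ∈ α. Then for all tuples u, v : Fin n → FreeMonoid α: (i) if |u i| = |v i| for all i then |f u| = |f v|; (ii) if |u i|_a = |v i|_a for all i then |f u|_a = |f v|_a; (iii) if |u i| − |u i|_a = |v i| − |v i|_a for all i then |f u| − |f u|_a = |f v| − |f v|_a. -/
/-- `f` is congruence preserving on the free monoid. -/
def IsCP {α : Type*} {n : ℕ} (f : (Fin n → FreeMonoid α) → FreeMonoid α) : Prop :=
  ∀ c : Con (FreeMonoid α), ∀ u v : Fin n → FreeMonoid α,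
    (∀ i, c (u i) (v i)) → c (f u) (f v)

/-- Number of occurrences of the letter `a` in the word `w`. -/
def countLetter {α : Type*} [DecidableEq α] (a : α) (w : FreeMonoid α) : ℕ :=
  (FreeMonoid.toList w).count a

private lemma sum_map_ite_eq_countP {α : Type*} (p : α → Bool) (l : List α) :
    (l.map fun b => if p b then 1 else 0).sum = l.countP p := by
  induction l with
  | nil => simp
  | cons x xs ih =>
    by_cases h : p x <;> simp [List.countP_cons, h, ih] <;> omega

private lemma cp_weight {α : Type*} {n : ℕ}
    (f : (Fin n → FreeMonoid α) → FreeMonoid α) (hf : IsCP f) (g : α → ℕ)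
    (u v : Fin n → FreeMonoid α)
    (h : ∀ i, ((u i).toList.map g).sum = ((v i).toList.map g).sum) :
    ((f u).toList.map g).sum = ((f v).toList.map g).sum := by
  let φ : FreeMonoid α →* Multiplicative ℕ :=
    FreeMonoid.lift fun b => Multiplicative.ofAdd (g b)
  have prodsum : ∀ l : List α,
      ((l.map fun b => Multiplicative.ofAdd (g b))).prod
        = Multiplicative.ofAdd ((l.map g).sum) := by
    intro l
    induction l with
    | nil => rfl
    | cons x xs ih => simp [ih]
  have key : ∀ w : FreeMonoid α, φ w = Multiplicative.ofAdd ((w.toList.map g).sum) := by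
    intro w
    rw [show φ w = ((w.toList.map fun b => Multiplicative.ofAdd (g b))).prod from
      FreeMonoid.lift_apply _ _, prodsum]
  have hcon := hf (Con.ker φ) u v (fun i => by
    rw [Con.ker_rel, key, key, h i])
  rw [Con.ker_rel, key, key] at hcon
  exact Multiplicative.ofAdd.injective hcon

/-- A CP function on the free monoid preserves: equality of lengths, equality of the
number of occurrences of a letter `a`, and equality of the number of occurrences of
letters other than `a`. -/
theorem cp_length_preserving {α : Type*} [DecidableEq α] {n : ℕ}
    (f : (Fin n → FreeMonoid α) → FreeMonoid α) (hf : IsCP f) (a : α) :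
    (∀ u v : Fin n → FreeMonoid α,
      (∀ i, (u i).length = (v i).length) → (f u).length = (f v).length) ∧
    (∀ u v : Fin n → FreeMonoid α,
      (∀ i, countLetter a (u i) = countLetter a (v i)) →
        countLetter a (f u) = countLetter a (f v)) ∧
    (∀ u v : Fin n → FreeMonoid α,
      (∀ i, (u i).length - countLetter a (u i) = (v i).length - countLetter a (v i)) →
        (f u).length - countLetter a (f u) = (f v).length - countLetter a (f v)) := by
  have len_eq : ∀ w : FreeMonoid α, (w.toList.map fun _ : α => (1:ℕ)).sum = w.length := by
    intro w
    simp [FreeMonoid.length]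
  have cnt_eq : ∀ w : FreeMonoid α,
      (w.toList.map fun b => if (b == a) then 1 else 0).sum = countLetter a w := by
    intro w
    rw [sum_map_ite_eq_countP]
    rfl
  have ncnt_eq : ∀ w : FreeMonoid α,
      (w.toList.map fun b => if (!(b == a)) then 1 else 0).sum
        = w.length - countLetter a w := by
    intro w
    rw [sum_map_ite_eq_countP]
    have hlen : w.length = w.toList.length := rfl
    have hcnt : countLetter a w = w.toList.countP (fun b => b == a) := rfl
    rw [hlen, hcnt]
    generalize w.toList = l
    induction l with
    | nil => rfl
    | cons x xs ih =>
      have hle : xs.countP (fun b => b == a) ≤ xs.length := List.countP_le_length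
      by_cases h : (x == a) <;>
        simp [List.countP_cons, h, ih] <;> omega
  refine ⟨?_, ?_, ?_⟩
  · intro u v h
    have := cp_weight f hf (fun _ => 1) u v (fun i => by rw [len_eq, len_eq, h i])
    rwa [len_eq, len_eq] at this
  · intro u v h
    have := cp_weight f hf (fun b => if (b == a) then 1 else 0) u v
      (fun i => by rw [cnt_eq, cnt_eq, h i])
    rwa [cnt_eq, cnt_eq] at this
  · intro u v h
    have := cp_weight f hf (fun b => if (!(b == a)) then 1 else 0) u v
      (fun i => by rw [ncnt_eq, ncnt_eq, h i])
    rwa [ncnt_eq, ncnt_eq] at this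
end

section
/- Let f : (Fin n → FreeMonoid α) → FreeMonoid α be congruence preserving and let a ∈ α. For all tuples u, v, w : Fin n → FreeMonoid α such that for every i one has |v i|_a = |u i|_a and |w i| − |w i|_a = |u i| − |u i|_a, it holds that |f u| = |f v|_a + (|f w| − |f w|_a). -/
/-- Counting occurrences of `a` as a monoid hom to `Multiplicative ℕ`. -/
def countHom {α : Type*} [DecidableEq α] (a : α) : FreeMonoid α →* Multiplicative ℕ where
  toFun w := Multiplicative.ofAdd (countLetter a w)
  map_one' := rfl
  map_mul' x y := by
    simp [countLetter, FreeMonoid.toList_mul, List.count_append, ofAdd_add]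

/-- Counting occurrences of letters other than `a` as a monoid hom. -/
def nonCountHom {α : Type*} [DecidableEq α] (a : α) : FreeMonoid α →* Multiplicative ℕ where
  toFun w := Multiplicative.ofAdd ((FreeMonoid.toList w).countP (fun b => ¬ b = a))
  map_one' := rfl
  map_mul' x y := by
    simp [FreeMonoid.toList_mul, List.countP_append, ofAdd_add]

lemma length_eq_count_add {α : Type*} [DecidableEq α] (a : α) (w : FreeMonoid α) :
    w.length = countLetter a w + (FreeMonoid.toList w).countP (fun b => ¬ b = a) := by
  have h := List.length_eq_countP_add_countP (l := FreeMonoid.toList w)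
    (p := fun b => decide (b = a))
  have e : countLetter a w = (FreeMonoid.toList w).countP (fun b => decide (b = a)) := by
    unfold countLetter; rw [List.count]; congr 1
  simpa [e, FreeMonoid.length] using h

lemma countP_eq_sub {α : Type*} [DecidableEq α] (a : α) (w : FreeMonoid α) :
    (FreeMonoid.toList w).countP (fun b => ¬ b = a) = w.length - countLetter a w := by
  have h := length_eq_count_add a w
  omega

/-- The length of the value of a CP function decomposes as the sum of the `a`-count
contribution and the non-`a` contribution. -/
theorem cp_length_decomposition {α : Type*} [DecidableEq α] {n : ℕ}
    (f : (Fin n → FreeMonoid α) → FreeMonoid α) (hf : IsCP f) (a : α)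
    (u v w : Fin n → FreeMonoid α)
    (hv : ∀ i, countLetter a (v i) = countLetter a (u i))
    (hw : ∀ i, (w i).length - countLetter a (w i) = (u i).length - countLetter a (u i)) :
    (f u).length = countLetter a (f v) + ((f w).length - countLetter a (f w)) := by
  have h1 : countLetter a (f u) = countLetter a (f v) := by
    have := hf (Con.ker (countHom a)) u v (fun i => by
      exact congrArg Multiplicative.ofAdd (hv i).symm)
    exact Multiplicative.ofAdd.injective this
  have h2 : (FreeMonoid.toList (f u)).countP (fun b => ¬ b = a)
      = (FreeMonoid.toList (f w)).countP (fun b => ¬ b = a) := by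
    have := hf (Con.ker (nonCountHom a)) u w (fun i => by
      simp only [Con.ker_rel, nonCountHom, MonoidHom.coe_mk, OneHom.coe_mk,
        countP_eq_sub, hw i])
    exact Multiplicative.ofAdd.injective (by simpa [Con.ker_rel, nonCountHom] using this)
  have hu := length_eq_count_add a (f u)
  have hwl := countP_eq_sub a (f w)
  omega
end

section
/- Let α be an alphabet with at least two distinct letters and let f : (Fin n → FreeMonoid α) → FreeMonoid α be congruence preserving. Then there exists a tuple k : Fin n → ℕ (the multidegree of f) such that for all u : Fin n → FreeMonoid α, |f u| = |f (fun _ => 1)| + ∑ i, k i * |u i|, where 1 denotes the empty word. -/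
namespace CPAux

open FreeMonoid

variable {α : Type*}

/-- The congruence "same number of letters satisfying `p`". -/
def conCount (p : α → Bool) : Con (FreeMonoid α) where
  r u v := (toList u).countP p = (toList v).countP p
  iseqv := ⟨fun _ => rfl, Eq.symm, Eq.trans⟩
  mul' := @fun w x y z h1 h2 => by
    have h1' : (toList w).countP p = (toList x).countP p := h1
    have h2' : (toList y).countP p = (toList z).countP p := h2
    show (toList (w * y)).countP p = (toList (x * z)).countP p
    simp only [toList_mul, List.countP_append]; omega

/-- The congruence "same length". -/
def conLen : Con (FreeMonoid α) where
  r u v := u.length = v.length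
  iseqv := ⟨fun _ => rfl, Eq.symm, Eq.trans⟩
  mul' := @fun w x y z h1 h2 => by
    have h1' : w.length = x.length := h1
    have h2' : y.length = z.length := h2
    show (w * y).length = (x * z).length
    simp only [FreeMonoid.length_mul]; omega

lemma toList_of_pow (x : α) (m : ℕ) : toList ((of x) ^ m) = List.replicate m x := by
  induction m with
  | zero => rfl
  | succ m ih => rw [pow_succ, toList_mul, ih, toList_of, ← List.replicate_succ']

lemma countP_of_pow (p : α → Bool) (x : α) (m : ℕ) :
    (toList ((of x) ^ m)).countP p = if p x then m else 0 := by
  rw [toList_of_pow, List.countP_replicate]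

lemma length_of_pow (x : α) (m : ℕ) : ((of x : FreeMonoid α) ^ m).length = m := by
  induction m with
  | zero => simp
  | succ m ih => rw [pow_succ, FreeMonoid.length_mul, ih, FreeMonoid.length_of]

lemma tri [DecidableEq α] (a b : α) (hab : a ≠ b) (l : List α) :
    l.length = l.countP (fun x => decide (x = a)) + l.countP (fun x => decide (x = b))
      + l.countP (fun x => !(decide (x = a) || decide (x = b))) := by
  induction l with
  | nil => simp
  | cons x l ih =>
    simp only [List.countP_cons, List.length_cons, Bool.not_or] at ih ⊢
    by_cases hxa : x = a
    · subst hxa; simp [hab]; omega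
    · by_cases hxb : x = b
      · subst hxb; simp [Ne.symm hab]; omega
      · simp [hxa, hxb]; omega

end CPAux

open FreeMonoid CPAux

/-- Every CP function on the free monoid over an alphabet with at least two letters
has a multidegree: length of the value is an affine function of the lengths of the
arguments. -/
theorem cp_multidegree {α : Type*} (a b : α) (hab : a ≠ b) {n : ℕ}
    (f : (Fin n → FreeMonoid α) → FreeMonoid α) (hf : IsCP f) :
    ∃ k : Fin n → ℕ, ∀ u : Fin n → FreeMonoid α,
      (f u).length = (f (fun _ => 1)).length + ∑ i, k i * (u i).length := by
  classical
  set pa : α → Bool := fun x => decide (x = a) with hpa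
  set pb : α → Bool := fun x => decide (x = b) with hpb
  set po : α → Bool := fun x => !(pa x || pb x) with hpo
  -- lengths of values depend only on lengths of arguments
  have hlen : ∀ u v : Fin n → FreeMonoid α,
      (∀ i, (u i).length = (v i).length) → (f u).length = (f v).length :=
    fun u v h => hf conLen u v h
  set Φ : (Fin n → ℕ) → ℕ := fun ℓ => (f (fun i => (of a) ^ (ℓ i))).length with hΦdef
  have hΦ : ∀ u : Fin n → FreeMonoid α, (f u).length = Φ (fun i => (u i).length) := by
    intro u
    exact hlen u _ (fun i => by rw [length_of_pow])
  -- the Pexider/Cauchy identity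
  have hC : ∀ p q : Fin n → ℕ, Φ (p + q) + Φ 0 = Φ p + Φ q := by
    intro p q
    set w : Fin n → FreeMonoid α := fun i => (of a) ^ (p i) * (of b) ^ (q i) with hw
    set ua : Fin n → FreeMonoid α := fun i => (of a) ^ (p i) with hua
    set ub : Fin n → FreeMonoid α := fun i => (of b) ^ (q i) with hub
    set e1 : Fin n → FreeMonoid α := fun _ => 1 with he1
    have hcnt : ∀ (r : α → Bool) (g h : Fin n → FreeMonoid α),
        (∀ i, (toList (g i)).countP r = (toList (h i)).countP r) →
        (toList (f g)).countP r = (toList (f h)).countP r :=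
      fun r g h hh => hf (conCount r) g h hh
    have hcw : ∀ i, toList (w i) = List.replicate (p i) a ++ List.replicate (q i) b := by
      intro i; rw [hw]; simp only [toList_mul, toList_of_pow]
    have paa : pa a = true := by simp [hpa]
    have pab : pa b = false := by simp [hpa, Ne.symm hab]
    have pba : pb a = false := by simp [hpb, hab]
    have pbb : pb b = true := by simp [hpb]
    have poa : po a = false := by simp [hpo, paa]
    have pob : po b = false := by simp [hpo, pbb]
    -- counts of arguments
    have h1 : (toList (f w)).countP pa = (toList (f ua)).countP pa := by
      refine hcnt pa w ua fun i => ?_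
      rw [hcw i, List.countP_append, List.countP_replicate, List.countP_replicate,
        countP_of_pow, paa, pab]
      simp
    have h2 : (toList (f w)).countP pb = (toList (f ub)).countP pb := by
      refine hcnt pb w ub fun i => ?_
      rw [hcw i, List.countP_append, List.countP_replicate, List.countP_replicate,
        countP_of_pow, pba, pbb]
      simp
    have h3 : (toList (f w)).countP po = (toList (f e1)).countP po := by
      refine hcnt po w e1 fun i => ?_
      rw [hcw i, List.countP_append, List.countP_replicate, List.countP_replicate, poa, pob]
      simp [he1]
    have h4 : (toList (f ua)).countP pb = (toList (f e1)).countP pb := by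
      refine hcnt pb ua e1 fun i => ?_
      rw [hua]; rw [countP_of_pow, pba]; simp [he1]
    have h5 : (toList (f ua)).countP po = (toList (f e1)).countP po := by
      refine hcnt po ua e1 fun i => ?_
      rw [hua]; rw [countP_of_pow, poa]; simp [he1]
    have h6 : (toList (f ub)).countP pa = (toList (f e1)).countP pa := by
      refine hcnt pa ub e1 fun i => ?_
      rw [hub]; rw [countP_of_pow, pab]; simp [he1]
    have h7 : (toList (f ub)).countP po = (toList (f e1)).countP po := by
      refine hcnt po ub e1 fun i => ?_
      rw [hub]; rw [countP_of_pow, pob]; simp [he1]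
    -- identify Φ values
    have hlw : ∀ g : Fin n → FreeMonoid α, (f g).length = (toList (f g)).length := fun _ => rfl
    have hΦpq : Φ (p + q) = (f w).length := by
      have hl : (fun i => (w i).length) = p + q := by
        funext i
        rw [hw]
        simp only [FreeMonoid.length_mul, length_of_pow, Pi.add_apply]
      rw [← hl]
      exact (hΦ w).symm
    have hΦp : Φ p = (f ua).length := rfl
    have hΦq : Φ q = (f ub).length := by
      have hl : (fun i => (ub i).length) = q := by
        funext i; rw [hub]; simp only [length_of_pow]
      rw [← hl]
      exact (hΦ ub).symm
    have hΦ0 : Φ 0 = (f e1).length := by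
      have hl : (fun i => (e1 i).length) = 0 := by
        funext i; rw [he1]; simp
      rw [← hl]
      exact (hΦ e1).symm
    have t1 := tri a b hab (toList (f w))
    have t2 := tri a b hab (toList (f ua))
    have t3 := tri a b hab (toList (f ub))
    have t4 := tri a b hab (toList (f e1))
    rw [hΦpq, hΦp, hΦq, hΦ0, hlw w, hlw ua, hlw ub, hlw e1]
    simp only [← hpa, ← hpb, ← hpo] at t1 t2 t3 t4
    have t1' : (toList (f w)).length = (toList (f w)).countP pa + (toList (f w)).countP pb + (toList (f w)).countP po := t1
    have t2' : (toList (f ua)).length = (toList (f ua)).countP pa + (toList (f ua)).countP pb + (toList (f ua)).countP po := t2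
    have t3' : (toList (f ub)).length = (toList (f ub)).countP pa + (toList (f ub)).countP pb + (toList (f ub)).countP po := t3
    have t4' : (toList (f e1)).length = (toList (f e1)).countP pa + (toList (f e1)).countP pb + (toList (f e1)).countP po := t4
    omega
  -- pass to ℤ: G is additive
  set G : (Fin n → ℕ) → ℤ := fun ℓ => (Φ ℓ : ℤ) - (Φ 0 : ℤ) with hGdef
  have hG : ∀ p q : Fin n → ℕ, G (p + q) = G p + G q := by
    intro p q
    have := hC p q
    simp only [hGdef]
    omega
  have hG0 : G 0 = 0 := by have := hG 0 0; simp at this; omega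
  have hGsum : ∀ (s : Finset (Fin n)) (g : Fin n → (Fin n → ℕ)),
      G (∑ i ∈ s, g i) = ∑ i ∈ s, G (g i) := by
    intro s
    induction s using Finset.induction with
    | empty => intro g; simpa using hG0
    | insert _ _ hx ih =>
      intro g
      rw [Finset.sum_insert hx, Finset.sum_insert hx, hG, ih]
  have hmul : ∀ (i : Fin n) (c : ℕ), G (Pi.single i c) = c * G (Pi.single i 1) := by
    intro i c
    induction c with
    | zero => simpa using hG0
    | succ c ih =>
      have : (Pi.single i (c + 1) : Fin n → ℕ) = Pi.single i c + Pi.single i 1 := by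
        rw [← Pi.single_add]
      rw [this, hG, ih]
      push_cast
      ring
  have hGform : ∀ ℓ : Fin n → ℕ, G ℓ = ∑ i, (ℓ i : ℤ) * G (Pi.single i 1) := by
    intro ℓ
    conv_lhs => rw [← Finset.univ_sum_single ℓ]
    rw [hGsum]
    exact Finset.sum_congr rfl fun i _ => hmul i (ℓ i)
  -- nonnegativity of the coefficients
  have hknn : ∀ i : Fin n, 0 ≤ G (Pi.single i 1) := by
    intro i
    by_contra h
    push_neg at h
    have hle : G (Pi.single i 1) ≤ -1 := by omega
    have h1 := hmul i (Φ 0 + 1)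
    have h2 : (0 : ℤ) ≤ (Φ (Pi.single i (Φ 0 + 1)) : ℤ) := Int.natCast_nonneg _
    have h3 : G (Pi.single i (Φ 0 + 1)) = (Φ (Pi.single i (Φ 0 + 1)) : ℤ) - (Φ 0 : ℤ) := rfl
    have h4 : ((Φ 0 + 1 : ℕ) : ℤ) * G (Pi.single i 1) ≤ ((Φ 0 + 1 : ℕ) : ℤ) * (-1) := by
      apply mul_le_mul_of_nonneg_left hle
      positivity
    push_cast at h1 h4
    rw [h3] at h1
    omega
  refine ⟨fun i => (G (Pi.single i 1)).toNat, fun u => ?_⟩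
  have hcast : ∀ i : Fin n, ((G (Pi.single i 1)).toNat : ℤ) = G (Pi.single i 1) :=
    fun i => Int.toNat_of_nonneg (hknn i)
  have hΦ1 : (f (fun _ => 1) : FreeMonoid α).length = Φ 0 := by
    rw [hΦ (fun _ => 1)]
    have h0 : (fun _ : Fin n => (1 : FreeMonoid α).length) = (0 : Fin n → ℕ) := by
      funext i; simp
    rw [h0]
  have key := hGform (fun i => (u i).length)
  have hfu : (f u).length = Φ (fun i => (u i).length) := hΦ u
  have : ((f u).length : ℤ) =
      ((f (fun _ => 1) : FreeMonoid α).length : ℤ)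
        + ∑ i, ((G (Pi.single i 1)).toNat : ℤ) * ((u i).length : ℤ) := by
    rw [hfu, hΦ1]
    have : (Φ (fun i => (u i).length) : ℤ) - (Φ 0 : ℤ) =
        ∑ i, ((u i).length : ℤ) * G (Pi.single i 1) := key
    rw [Finset.sum_congr rfl fun i _ => by rw [hcast i, mul_comm]]
    omega
  exact_mod_cast this
end

section
/- Let α be a nonempty alphabet and let f : (Fin n → FreeMagma (Option α)) → FreeMagma (Option α) be congruence preserving on the algebra of binary trees. Then there exists a tuple k : Fin n → ℕ (the multidegree of f) such that for all u : Fin n → FreeMagma (Option α), |f u| = |f (fun _ => 𝟘)| + ∑ i, k i * |u i|, where 𝟘 = FreeMagma.of none is the empty tree. -/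
/-- The length of a tree: the number of leaves labeled by a letter of `α`
(the empty tree `FreeMagma.of none` has length 0). -/
def treeLen {α : Type*} : FreeMagma (Option α) → ℕ
  | FreeMagma.of none => 0
  | FreeMagma.of (some _) => 1
  | FreeMagma.mul t₁ t₂ => treeLen t₁ + treeLen t₂

open scoped Classical

namespace TreeCPProof

variable {α : Type*}

@[simp] lemma treeLen_mul (s t : FreeMagma (Option α)) :
    treeLen (s * t) = treeLen s + treeLen t := rfl

@[simp] lemma treeLen_none : treeLen (FreeMagma.of (none : Option α)) = 0 := rfl

@[simp] lemma treeLen_some (x : α) : treeLen (FreeMagma.of (some x)) = 1 := rfl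

/-- Number of leaves of a tree. -/
def leafCnt : FreeMagma (Option α) → ℕ
  | .of _ => 1
  | .mul s t => leafCnt s + leafCnt t

@[simp] lemma leafCnt_of (x : Option α) : leafCnt (FreeMagma.of x) = 1 := rfl

@[simp] lemma leafCnt_mul (s t : FreeMagma (Option α)) :
    leafCnt (s * t) = leafCnt s + leafCnt t := rfl

lemma leafCnt_pos (t : FreeMagma (Option α)) : 0 < leafCnt t := by
  induction t with
  | ih1 x => simp [leafCnt]
  | ih2 s t ihs iht => simp only [leafCnt_mul]; omega

/-- Number of `none`-labeled leaves. -/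
def zCnt : FreeMagma (Option α) → ℕ
  | .of none => 1
  | .of (some _) => 0
  | .mul s t => zCnt s + zCnt t

@[simp] lemma zCnt_none : zCnt (FreeMagma.of (none : Option α)) = 1 := rfl
@[simp] lemma zCnt_some (x : α) : zCnt (FreeMagma.of (some x)) = 0 := rfl
@[simp] lemma zCnt_mul (s t : FreeMagma (Option α)) :
    zCnt (s * t) = zCnt s + zCnt t := rfl

/-- The tree of length `m`: a left comb with a `none` leaf and `m` `a`-leaves. -/
def Tm (a : α) : ℕ → FreeMagma (Option α)
  | 0 => FreeMagma.of none
  | m + 1 => Tm a m * FreeMagma.of (some a)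

@[simp] lemma treeLen_Tm (a : α) (m : ℕ) : treeLen (Tm a m) = m := by
  induction m with
  | zero => rfl
  | succ m ih => simp [Tm, ih]

/-- The pure left comb with `k + 1` `a`-leaves. -/
def cmb (a : α) : ℕ → FreeMagma (Option α)
  | 0 => FreeMagma.of (some a)
  | k + 1 => cmb a k * FreeMagma.of (some a)

@[simp] lemma treeLen_cmb (a : α) (k : ℕ) : treeLen (cmb a k) = k + 1 := by
  induction k with
  | zero => rfl
  | succ k ih => simp [cmb, ih]

@[simp] lemma leafCnt_cmb (a : α) (k : ℕ) : leafCnt (cmb a k) = k + 1 := by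
  induction k with
  | zero => rfl
  | succ k ih => simp [cmb, ih]

@[simp] lemma zCnt_cmb (a : α) (k : ℕ) : zCnt (cmb a k) = 0 := by
  induction k with
  | zero => rfl
  | succ k ih => simp [cmb, ih]

/-- Normal form: contract every occurrence of the pattern `X` to the empty tree. -/
noncomputable def nf (X : FreeMagma (Option α)) : FreeMagma (Option α) → FreeMagma (Option α)
  | .of x => FreeMagma.of x
  | .mul s t =>
      if nf X s * nf X t = X then FreeMagma.of none else nf X s * nf X t

@[simp] lemma nf_of (X : FreeMagma (Option α)) (x : Option α) :
    nf X (FreeMagma.of x) = FreeMagma.of x := rfl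

lemma nf_mul (X s t : FreeMagma (Option α)) :
    nf X (s * t) = if nf X s * nf X t = X then FreeMagma.of none else nf X s * nf X t := rfl

/-- Trees with fewer leaves than `X` are already in normal form. -/
lemma nf_eq_self (X : FreeMagma (Option α)) (t : FreeMagma (Option α))
    (h : leafCnt t < leafCnt X) : nf X t = t := by
  induction t with
  | ih1 x => rfl
  | ih2 s t ihs iht =>
      have hs := leafCnt_pos s
      have ht := leafCnt_pos t
      have h1 : nf X s = s := ihs (by simp only [leafCnt_mul] at h; omega)
      have h2 : nf X t = t := iht (by simp only [leafCnt_mul] at h; omega)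
      have hne : ¬ (s * t = X) := by
        intro he
        rw [← he] at h
        simp only [leafCnt_mul] at h
        omega
      rw [nf_mul, h1, h2, if_neg hne]

lemma nf_cmb_self (a : α) (k : ℕ) (hk : 1 ≤ k) :
    nf (cmb a k) (cmb a k) = FreeMagma.of none := by
  obtain ⟨j, rfl⟩ : ∃ j, k = j + 1 := ⟨k - 1, by omega⟩
  show nf (cmb a (j+1)) (cmb a j * FreeMagma.of (some a)) = FreeMagma.of none
  rw [nf_mul, nf_eq_self _ (cmb a j) (by simp), nf_of]
  have he : cmb a j * FreeMagma.of (some a) = cmb a (j + 1) := rfl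
  rw [if_pos he]

/-- Counting lemma: if `X` has no `none` leaves, then normalizing a tree removes
exactly `c` disjoint copies of `X`, for some `c`. -/
lemma nf_count (X : FreeMagma (Option α)) (hX : zCnt X = 0) (t : FreeMagma (Option α)) :
    ∃ c : ℕ, treeLen t = treeLen (nf X t) + treeLen X * c ∧
      zCnt (nf X t) = zCnt t + c := by
  induction t with
  | ih1 x => exact ⟨0, by simp⟩
  | ih2 s t ihs iht =>
      obtain ⟨c₁, hl₁, hz₁⟩ := ihs
      obtain ⟨c₂, hl₂, hz₂⟩ := iht
      by_cases h : nf X s * nf X t = X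
      · refine ⟨c₁ + c₂ + 1, ?_, ?_⟩
        · have hlen : treeLen (nf X s) + treeLen (nf X t) = treeLen X := by
            have := congrArg treeLen h; simpa using this
          rw [nf_mul, if_pos h]
          simp only [treeLen_mul, treeLen_none]
          have hr : treeLen X * (c₁ + c₂ + 1) = treeLen X * c₁ + treeLen X * c₂ + treeLen X := by
            ring
          omega
        · have hz : zCnt (nf X s) + zCnt (nf X t) = 0 := by
            have := congrArg zCnt h; simpa [hX] using this
          rw [nf_mul, if_pos h]
          simp only [zCnt_mul, zCnt_none]
          omega
      · refine ⟨c₁ + c₂, ?_, ?_⟩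
        · rw [nf_mul, if_neg h]
          simp only [treeLen_mul]
          have hr : treeLen X * (c₁ + c₂) = treeLen X * c₁ + treeLen X * c₂ := by ring
          omega
        · rw [nf_mul, if_neg h]
          simp only [zCnt_mul]
          omega

/-- The congruence identifying trees of equal length. -/
def lenCon : Con (FreeMagma (Option α)) where
  r s t := treeLen s = treeLen t
  iseqv := ⟨fun _ => rfl, Eq.symm, Eq.trans⟩
  mul' {w x y z} h₁ h₂ := by
    show treeLen (w * y) = treeLen (x * z)
    simp only [treeLen_mul]
    exact congrArg₂ (· + ·) h₁ h₂

lemma lenCon_iff {s t : FreeMagma (Option α)} : lenCon s t ↔ treeLen s = treeLen t := Iff.rfl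

/-- The congruence identifying trees of equal length mod `r`. -/
def modCon (p : ℕ) : Con (FreeMagma (Option α)) where
  r s t := treeLen s % p = treeLen t % p
  iseqv := ⟨fun _ => rfl, Eq.symm, Eq.trans⟩
  mul' {w x y z} h₁ h₂ := by
    show (treeLen w + treeLen y) % p = (treeLen x + treeLen z) % p
    exact Nat.ModEq.add h₁ h₂

lemma modCon_iff {p : ℕ} {s t : FreeMagma (Option α)} :
    modCon p s t ↔ treeLen s % p = treeLen t % p := Iff.rfl

/-- The congruence identifying trees with the same normal form. -/
def nfCon (X : FreeMagma (Option α)) : Con (FreeMagma (Option α)) where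
  r s t := nf X s = nf X t
  iseqv := ⟨fun _ => rfl, Eq.symm, Eq.trans⟩
  mul' {w x y z} h₁ h₂ := by
    show nf X (w * y) = nf X (x * z)
    rw [nf_mul, nf_mul, h₁, h₂]

lemma nfCon_iff {X s t : FreeMagma (Option α)} : nfCon X s t ↔ nf X s = nf X t := Iff.rfl

/-- The purely arithmetic core: a function `F` respecting modular congruences
coordinatewise and with eventually-linear diagonals over each subset of
coordinates is affine. -/
lemma arith {n : ℕ} (F : (Fin n → ℕ) → ℕ)
    (hmod : ∀ (r : ℕ) (m m' : Fin n → ℕ), (∀ i, m i % r = m' i % r) → F m % r = F m' % r)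
    (hdiag : ∀ (m : Fin n → ℕ) (S : Finset (Fin n)), ∃ Z N : ℕ, ∀ M, N < M →
      ∃ d, d ≤ Z ∧
        F (fun i => if i ∈ S then M else m i) = F (fun i => if i ∈ S then 0 else m i) + M * d) :
    ∃ k : Fin n → ℕ, ∀ m, F m = F 0 + ∑ i, k i * m i := by
  -- Step 1: exact linearity on each diagonal
  have S1 : ∀ (m : Fin n → ℕ) (S : Finset (Fin n)), ∃ d : ℕ, ∀ M,
      F (fun i => if i ∈ S then M else m i) = F (fun i => if i ∈ S then 0 else m i) + M * d := by
    intro m S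
    obtain ⟨Z, N, h⟩ := hdiag m S
    set G : ℕ → ℕ := fun M => F (fun i => if i ∈ S then M else m i) with hG
    set B : ℕ := F (fun i => if i ∈ S then 0 else m i) with hB
    have hmodG : ∀ M M' r : ℕ, M % r = M' % r → G M % r = G M' % r := by
      intro M M' r hr
      exact hmod r _ _ (fun i => by by_cases hi : i ∈ S <;> simp [hi, hr])
    have cmp : ∀ M M' dM dM' : ℕ, 0 < M → M + M * Z < M' → dM ≤ Z → dM' ≤ Z →
        G M = B + M * dM → G M' = B + M' * dM' → dM' = dM := by
      intro M M' dM dM' hM hMM' hdM hdM' hGM hGM'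
      set g : ℕ := M' - M with hg
      have hg0 : M * Z < g := by omega
      have hmodeq : (B + M * dM) ≡ (B + M' * dM') [MOD g] := by
        have h0 : M % g = M' % g := by
          conv_rhs => rw [show M' = M + g by omega]
          exact (Nat.add_mod_right M g).symm
        have := hmodG M M' g h0
        rw [hGM, hGM'] at this
        exact this
      have hdvd : (g : ℤ) ∣ ((B + M' * dM' : ℕ) : ℤ) - ((B + M * dM : ℕ) : ℤ) := hmodeq.dvd
      have hM'cast : (M' : ℤ) = (M : ℤ) + (g : ℤ) := by omega
      have key : (g : ℤ) ∣ (M : ℤ) * ((dM' : ℤ) - (dM : ℤ)) := by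
        have e : ((B + M' * dM' : ℕ) : ℤ) - ((B + M * dM : ℕ) : ℤ)
            = (g : ℤ) * (dM' : ℤ) + (M : ℤ) * ((dM' : ℤ) - (dM : ℤ)) := by
          push_cast
          rw [hM'cast]
          ring
        rw [e] at hdvd
        exact (dvd_add_right (dvd_mul_right _ _)).mp hdvd
      have he : (M : ℤ) * ((dM' : ℤ) - (dM : ℤ)) = 0 := by
        by_contra h0
        have h1 : (g : ℤ) ∣ |(M : ℤ) * ((dM' : ℤ) - (dM : ℤ))| := (dvd_abs _ _).mpr key
        have h2 := Int.le_of_dvd (abs_pos.mpr h0) h1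
        have h3 : |(M : ℤ) * ((dM' : ℤ) - (dM : ℤ))| ≤ (M : ℤ) * (Z : ℤ) := by
          rw [abs_mul, abs_of_nonneg (by positivity : (0 : ℤ) ≤ (M : ℤ))]
          have habs : |(dM' : ℤ) - (dM : ℤ)| ≤ (Z : ℤ) := by
            rw [abs_le]
            constructor <;> omega
          exact mul_le_mul_of_nonneg_left habs (by positivity)
        have h4 : ((M : ℤ) * (Z : ℤ)) < (g : ℤ) := by exact_mod_cast hg0
        linarith
      have : (dM' : ℤ) = (dM : ℤ) := by
        rcases mul_eq_zero.mp he with h5 | h5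
        · omega
        · omega
      exact_mod_cast this
    obtain ⟨d0, hd0Z, hd0⟩ := h (N + 1) (by omega)
    have slope_eq : ∀ M, N < M → G M = B + M * d0 := by
      intro M hM
      obtain ⟨dM, hdMZ, hGM⟩ := h M hM
      have hdMd0 : dM = d0 := by
        set M' := (M + N + 2) * (Z + 1) with hM'
        have hexp : M' = (M + N + 2) * Z + (M + N + 2) := by rw [hM']; ring
        have hb1 : M * Z ≤ (M + N + 2) * Z := Nat.mul_le_mul (by omega) (le_refl Z)
        have hb2 : (N + 1) * Z ≤ (M + N + 2) * Z := Nat.mul_le_mul (by omega) (le_refl Z)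
        have h1 : N < M' := by
          calc N < M + N + 2 := by omega
            _ ≤ (M + N + 2) * Z + (M + N + 2) := Nat.le_add_left _ _
            _ = M' := hexp.symm
        obtain ⟨d', hd'Z, hG'⟩ := h M' h1
        have hbig1 : M + M * Z < M' := by
          calc M + M * Z ≤ M + (M + N + 2) * Z := Nat.add_le_add_left hb1 M
            _ < (M + N + 2) + (M + N + 2) * Z := Nat.add_lt_add_right (by omega) _
            _ = (M + N + 2) * Z + (M + N + 2) := Nat.add_comm _ _
            _ = M' := hexp.symm
        have hbig2 : (N + 1) + (N + 1) * Z < M' := by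
          calc (N + 1) + (N + 1) * Z ≤ (N + 1) + (M + N + 2) * Z := Nat.add_le_add_left hb2 _
            _ < (M + N + 2) + (M + N + 2) * Z := Nat.add_lt_add_right (by omega) _
            _ = (M + N + 2) * Z + (M + N + 2) := Nat.add_comm _ _
            _ = M' := hexp.symm
        have e1 : d' = dM := cmp M M' dM d' (by omega) hbig1 hdMZ hd'Z hGM hG'
        have e2 : d' = d0 := cmp (N + 1) M' d0 d' (by omega) hbig2 hd0Z hd'Z hd0 hG'
        omega
      show F (fun i => if i ∈ S then M else m i) = B + M * d0
      rw [hGM, hdMd0]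
    refine ⟨d0, fun M => ?_⟩
    set r : ℕ := G M + (B + M * d0) + N + 1 with hr
    have h1 : G M % r = G (M + r) % r := hmodG M (M + r) r (Nat.add_mod_right M r).symm
    have h2 : G (M + r) = B + (M + r) * d0 := slope_eq (M + r) (by omega)
    have h3 : (B + (M + r) * d0) % r = (B + M * d0) % r := by
      have e : B + (M + r) * d0 = (B + M * d0) + d0 * r := by ring
      rw [e, Nat.add_mul_mod_self_right]
    have h4 : G M % r = (B + M * d0) % r := by rw [h1, h2, h3]
    have h5 : G M < r := by omega
    have h6 : B + M * d0 < r := by omega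
    rw [Nat.mod_eq_of_lt h5, Nat.mod_eq_of_lt h6] at h4
    exact h4
  -- translate singleton diagonals into updates
  have upd_eq : ∀ (m : Fin n → ℕ) (i : Fin n) (M : ℕ),
      (fun l => if l ∈ ({i} : Finset (Fin n)) then M else m l) = Function.update m i M := by
    intro m i M
    funext l
    by_cases hl : l = i <;> simp [hl, Function.update_apply]
  have hslope0 : ∀ (m : Fin n → ℕ) (i : Fin n), ∃ d : ℕ, ∀ M,
      F (Function.update m i M) = F (Function.update m i 0) + M * d := by
    intro m i
    obtain ⟨d, hd⟩ := S1 m {i}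
    refine ⟨d, fun M => ?_⟩
    rw [← upd_eq, ← upd_eq]
    exact hd M
  choose slope hslope using hslope0
  -- independence of the slope from the other coordinates (pairwise)
  have hindep : ∀ (m : Fin n → ℕ) (i j : Fin n), i ≠ j →
      slope m i = slope (Function.update m j 0) i := by
    intro m i j hij
    set G2 : ℕ → ℕ → ℕ := fun s t => F (Function.update (Function.update m i s) j t) with hG2
    have hcomm : ∀ s t, Function.update (Function.update m j t) i s
        = Function.update (Function.update m i s) j t :=
      fun s t => Function.update_comm hij.symm t s m
    set a : ℕ → ℕ := fun t => slope (Function.update m j t) i with ha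
    set b : ℕ → ℕ := fun s => slope (Function.update m i s) j with hb
    have hA : ∀ t s, G2 s t = G2 0 t + s * a t := by
      intro t s
      have h1 := hslope (Function.update m j t) i s
      rw [hcomm s t, hcomm 0 t] at h1
      exact h1
    have hB : ∀ s t, G2 s t = G2 s 0 + t * b s := fun s t =>
      hslope (Function.update m i s) j t
    obtain ⟨dd, hdd⟩ := S1 m {i, j}
    have hset : ∀ M : ℕ, (fun l => if l ∈ ({i, j} : Finset (Fin n)) then M else m l)
        = Function.update (Function.update m i M) j M := by
      intro M
      funext l
      by_cases hli : l = i
      · subst hli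
        simp [Function.update_apply, hij, if_neg (by exact hij)]
      · by_cases hlj : l = j
        · subst hlj; simp [Function.update_apply]
        · simp [Function.update_apply, hli, hlj]
    have hC : ∀ M, G2 M M = G2 0 0 + M * dd := by
      intro M
      have := hdd M
      rw [hset M, hset 0] at this
      exact this
    have e1 : ∀ t, a t + t * b 0 = a 0 + t * b 1 := by
      intro t
      have h1 : G2 1 t = G2 0 t + a t := by have := hA t 1; omega
      have h2 : G2 0 t = G2 0 0 + t * b 0 := hB 0 t
      have h3 : G2 1 t = G2 1 0 + t * b 1 := hB 1 t
      have h4 : G2 1 0 = G2 0 0 + a 0 := by have := hA 0 1; omega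
      omega
    have e2 : ∀ M, 0 < M → a M + b 0 = dd := by
      intro M hM
      have h1 : G2 M M = G2 0 M + M * a M := hA M M
      have h2 : G2 0 M = G2 0 0 + M * b 0 := hB 0 M
      have h3 : G2 M M = G2 0 0 + M * dd := hC M
      have h5 : M * (a M + b 0) = M * dd := by
        rw [Nat.mul_add]
        omega
      exact Nat.eq_of_mul_eq_mul_left hM h5
    have ha0 : a (m j) = a 0 := by
      rcases Nat.eq_zero_or_pos (m j) with h | h
      · rw [h]
      · have q1 := e2 (m j) h
        have q2 := e2 1 one_pos
        have q3 := e2 2 (by omega)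
        have q4 := e1 1
        have q5 := e1 2
        omega
    have : slope m i = a (m j) := by
      have : Function.update m j (m j) = m := Function.update_eq_self j m
      rw [ha]
      simp only []
      rw [this]
    rw [this, ha0]
  -- the slope only depends on the coordinate
  have hconst : ∀ (m : Fin n → ℕ) (i : Fin n), slope m i = slope 0 i := by
    intro m i
    have main : ∀ (s : Finset (Fin n)) (m : Fin n → ℕ),
        (∀ j, j ∉ s → m j = 0) → slope m i = slope 0 i := by
      intro s
      induction s using Finset.induction_on with
      | empty =>
          intro m hm
          have : m = 0 := funext fun j => hm j (Finset.notMem_empty j)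
          rw [this]
      | @insert c s hc ih =>
          intro m hm
          have hm' : ∀ j, j ∉ s → Function.update m c 0 j = 0 := by
            intro j hj
            by_cases hjc : j = c
            · subst hjc; simp
            · rw [Function.update_apply, if_neg hjc]
              exact hm j (by simp [hjc, hj])
          by_cases hci : c = i
          · subst hci
            have h1 : slope m c = slope (Function.update m c 0) c := by
              have e1 := hslope m c 1
              have e2 := hslope (Function.update m c 0) c 1
              rw [Function.update_idem, Function.update_idem] at e2
              omega
            rw [h1]
            exact ih _ hm'
          · have h1 : slope m i = slope (Function.update m c 0) i :=
              hindep m i c (fun h => hci h.symm)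
            rw [h1]
            exact ih _ hm'
    exact main Finset.univ m (fun j hj => absurd (Finset.mem_univ j) hj)
  -- assemble affinity
  refine ⟨fun i => slope 0 i, ?_⟩
  have main : ∀ (s : Finset (Fin n)) (m : Fin n → ℕ), (∀ j, j ∉ s → m j = 0) →
      F m = F 0 + ∑ i ∈ s, slope 0 i * m i := by
    intro s
    induction s using Finset.induction_on with
    | empty =>
        intro m hm
        have : m = 0 := funext fun j => hm j (Finset.notMem_empty j)
        rw [this]
        simp
    | @insert c s hc ih =>
        intro m hm
        have hm' : ∀ j, j ∉ s → Function.update m c 0 j = 0 := by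
          intro j hj
          by_cases hjc : j = c
          · subst hjc; simp
          · rw [Function.update_apply, if_neg hjc]
            exact hm j (by simp [hjc, hj])
        have e0 : F m = F (Function.update m c 0) + (m c) * slope (Function.update m c 0) c := by
          have e1 := hslope (Function.update m c 0) c (m c)
          rw [Function.update_idem, Function.update_idem, Function.update_eq_self] at e1
          exact e1
        rw [e0, ih _ hm', hconst]
        rw [Finset.sum_insert hc]
        have hsum : ∀ i ∈ s, slope 0 i * (Function.update m c 0 i) = slope 0 i * m i := by
          intro i hi
          rw [Function.update_apply, if_neg (by rintro rfl; exact hc hi)]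
        rw [Finset.sum_congr rfl hsum]
        ring
  intro m
  exact main Finset.univ m (fun j hj => absurd (Finset.mem_univ j) hj)

end TreeCPProof

open TreeCPProof in
/-- Every CP function on the algebra of binary trees over a nonempty alphabet has a
multidegree: length of the value is an affine function of the lengths of the
arguments. -/
theorem tree_cp_multidegree {α : Type*} [Nonempty α] {n : ℕ}
    (f : (Fin n → FreeMagma (Option α)) → FreeMagma (Option α)) (hf : IsTreeCP f) :
    ∃ k : Fin n → ℕ, ∀ u : Fin n → FreeMagma (Option α),
      treeLen (f u) = treeLen (f (fun _ => FreeMagma.of none)) + ∑ i, k i * treeLen (u i) := by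
  obtain ⟨a⟩ := ‹Nonempty α›
  set F : (Fin n → ℕ) → ℕ := fun m => treeLen (f (fun i => Tm a (m i))) with hFdef
  have hlen : ∀ (u v : Fin n → FreeMagma (Option α)),
      (∀ i, treeLen (u i) = treeLen (v i)) → treeLen (f u) = treeLen (f v) :=
    fun u v h => hf lenCon u v (fun i => lenCon_iff.mpr (h i))
  have hmod : ∀ (r : ℕ) (m m' : Fin n → ℕ), (∀ i, m i % r = m' i % r) →
      F m % r = F m' % r := by
    intro r m m' h
    exact hf (modCon r) _ _ (fun i => modCon_iff.mpr (by simp [h i]))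
  have hdiag : ∀ (m : Fin n → ℕ) (S : Finset (Fin n)), ∃ Z N : ℕ, ∀ M, N < M →
      ∃ d, d ≤ Z ∧
        F (fun i => if i ∈ S then M else m i) = F (fun i => if i ∈ S then 0 else m i) + M * d := by
    intro m S
    set u : Fin n → FreeMagma (Option α) :=
      fun i => if i ∈ S then FreeMagma.of none else Tm a (m i) with hu
    refine ⟨zCnt (f u), leafCnt (f u), fun M hM => ?_⟩
    have hM2 : 2 ≤ M := by have := leafCnt_pos (f u); omega
    set X : FreeMagma (Option α) := cmb a (M - 1) with hX
    have hlenX : treeLen X = M := by rw [hX, treeLen_cmb]; omega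
    have hleafX : leafCnt X = M := by rw [hX, leafCnt_cmb]; omega
    have hzX : zCnt X = 0 := by rw [hX, zCnt_cmb]
    set v : Fin n → FreeMagma (Option α) :=
      fun i => if i ∈ S then X else Tm a (m i) with hv
    have hnf : nf X (f u) = nf X (f v) := by
      refine hf (nfCon X) u v (fun i => nfCon_iff.mpr ?_)
      by_cases hi : i ∈ S
      · simp only [hu, hv, if_pos hi]
        rw [nf_of, hX, nf_cmb_self a (M - 1) (by omega)]
      · simp [hu, hv, hi]
    have hfu : nf X (f u) = f u := nf_eq_self X (f u) (by rw [hleafX]; exact hM)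
    obtain ⟨c, hl, hz⟩ := nf_count X hzX (f v)
    rw [← hnf, hfu] at hl hz
    refine ⟨c, by omega, ?_⟩
    have e1 : F (fun i => if i ∈ S then M else m i) = treeLen (f v) := by
      apply hlen
      intro i
      by_cases hi : i ∈ S <;> simp [hv, hi, hlenX]
    have e2 : F (fun i => if i ∈ S then 0 else m i) = treeLen (f u) := by
      apply hlen
      intro i
      by_cases hi : i ∈ S <;> simp [hu, hi]
    rw [e1, e2, hl, hlenX]
  obtain ⟨k, hk⟩ := arith F hmod hdiag
  refine ⟨k, fun u => ?_⟩
  have h1 : treeLen (f u) = F (fun i => treeLen (u i)) := by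
    apply hlen
    intro i
    simp
  rw [h1, hk]
  have h2 : F 0 = treeLen (f (fun _ => FreeMagma.of none)) := by
    apply hlen
    intro i
    simp [Tm]
  rw [h2]
end

section
/- Let a, b be distinct letters of α, let n > 1, let τ = a^n · b · a · b^n, and let v be a word with |v| < |τ| = 2n+2. Then for every word t ∈ FreeMonoid α there exists a unique word t' such that t ~_{τ,v} t' and t' is τ-irreducible (τ is not a factor of t'). -/
/-- `w` is a factor of `t`. -/
def IsFactor {α : Type*} (w t : FreeMonoid α) : Prop := ∃ u u' : FreeMonoid α, t = u * w * u'

namespace WordAux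

variable {α : Type*}

/-- The pattern `aⁿbabⁿ` as a list. -/
def T (a b : α) (n : ℕ) : List α := (List.replicate n a ++ [b, a]) ++ List.replicate n b

lemma T_length (a b : α) (n : ℕ) : (T a b n).length = n + n + 2 := by
  simp only [T, List.length_append, List.length_replicate, List.length_cons, List.length_nil]
  omega

lemma T_get_lt (a b : α) {n i : ℕ} (hi : i < n) (hb : i < (T a b n).length) :
    (T a b n)[i] = a := by
  simp only [T]
  rw [List.getElem_append_left (by simp; omega), List.getElem_append_left (by simpa using hi),
    List.getElem_replicate]

lemma T_get_n (a b : α) {n : ℕ} (hb : n < (T a b n).length) :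
    (T a b n)[n] = b := by
  simp only [T]
  rw [List.getElem_append_left (by simp),
    List.getElem_append_right (by simp)]
  simp

lemma T_get_n1 (a b : α) {n : ℕ} (hb : n + 1 < (T a b n).length) :
    (T a b n)[n + 1] = a := by
  simp only [T]
  rw [List.getElem_append_left (by simp),
    List.getElem_append_right (by simp)]
  simp

lemma T_get_big (a b : α) {n i : ℕ} (hi : n + 2 ≤ i) (hb : i < (T a b n).length) :
    (T a b n)[i] = b := by
  simp only [T]
  rw [List.getElem_append_right (by simp; omega), List.getElem_replicate]

lemma no_overlap {a b : α} (hab : a ≠ b) {n : ℕ} (hn : 1 < n) (d : List α)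
    (hd1 : d ≠ []) (hd2 : d.length < (T a b n).length)
    (h : T a b n = d ++ (T a b n).take ((T a b n).length - d.length)) : False := by
  have hlen := T_length a b n
  set m := d.length with hm
  have hm1 : 0 < m := List.length_pos_iff.mpr hd1
  have key : ∀ i j : ℕ, i < n + n + 2 - m → j = m + i →
      ∀ (h1 : i < (T a b n).length) (h2 : j < (T a b n).length),
      (T a b n)[i] = (T a b n)[j] := by
    rintro i j hi rfl h1 h2
    have e1 : (T a b n)[m + i] =
        (d ++ (T a b n).take ((T a b n).length - m))[m + i]'(by rw [← h]; exact h2) :=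
      List.getElem_of_eq h h2
    rw [e1, List.getElem_append_right (by omega)]
    simp only [← hm, Nat.add_sub_cancel_left]
    rw [List.getElem_take]
  rcases lt_trichotomy m (n + 1) with hc | hc | hc
  · -- m ≤ n, use i = n - m, j = n
    have := key (n - m) n (by omega) (by omega) (by omega) (by omega)
    rw [T_get_lt a b (by omega), T_get_n a b] at this
    exact hab this
  · -- m = n + 1, use i = 1, j = n + 2
    have := key 1 (n + 2) (by omega) (by omega) (by omega) (by omega)
    rw [T_get_lt a b (by omega), T_get_big a b (by omega)] at this
    exact hab this
  · -- m ≥ n + 2, use i = 0, j = m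
    have := key 0 m (by omega) (by omega) (by omega) (by omega)
    rw [T_get_lt a b (by omega), T_get_big a b (by omega)] at this
    exact hab this

lemma overlap_cases {a b : α} (hab : a ≠ b) {n : ℕ} (hn : 1 < n)
    {x y x' y' : List α} (h : x ++ T a b n ++ y = x' ++ T a b n ++ y')
    (hlt : x.length < x'.length) :
    ∃ p : List α, x' = x ++ T a b n ++ p ∧ y = p ++ T a b n ++ y' := by
  have hpre : x <+: x' := by
    refine List.prefix_of_prefix_length_le ⟨T a b n ++ y, ?_⟩
      ⟨T a b n ++ y', (List.append_assoc _ _ _).symm⟩ hlt.le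
    rw [← List.append_assoc]; exact h
  obtain ⟨d, rfl⟩ := hpre
  have hd1 : d ≠ [] := by
    rw [List.length_append] at hlt
    exact List.ne_nil_of_length_pos (by omega)
  have h2 : T a b n ++ y = d ++ (T a b n ++ y') := by
    have h3 := h
    simp only [List.append_assoc] at h3
    exact List.append_cancel_left h3
  rcases lt_or_ge d.length (T a b n).length with hdl | hdl
  · exfalso
    apply no_overlap hab hn d hd1 hdl
    have := congrArg (List.take (T a b n).length) h2
    rwa [List.take_append_of_le_length le_rfl, List.take_length,
      List.take_append, List.take_of_length_le hdl.le,
      List.take_append_of_le_length (by omega)] at this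
  · have hTd : T a b n <+: d :=
      List.prefix_of_prefix_length_le ⟨y, by rw [h2]⟩ (List.prefix_append _ _) hdl
    obtain ⟨p, rfl⟩ := hTd
    refine ⟨p, by rw [List.append_assoc], ?_⟩
    rw [List.append_assoc (T a b n) p] at h2
    have h4 := List.append_cancel_left h2
    rw [h4, List.append_assoc]

end WordAux

namespace WordAux

variable {α : Type*}

/-- One-step rewriting `τ → v`. -/
def Rw (τ v : FreeMonoid α) (x y : FreeMonoid α) : Prop :=
  ∃ u u' : FreeMonoid α, x = u * τ * u' ∧ y = u * v * u'

lemma toList_pow_of (x : α) (k : ℕ) :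
    FreeMonoid.toList (FreeMonoid.of x ^ k) = List.replicate k x := by
  induction k with
  | zero => simp
  | succ k ih =>
      rw [pow_succ, FreeMonoid.toList_mul, ih, FreeMonoid.toList_of, List.replicate_succ']

lemma eqvGen_mul_right {τ v : FreeMonoid α} {w x : FreeMonoid α}
    (h : Relation.EqvGen (Rw τ v) w x) (y : FreeMonoid α) :
    Relation.EqvGen (Rw τ v) (w * y) (x * y) := by
  induction h with
  | rel p q hpq =>
      obtain ⟨u, u', rfl, rfl⟩ := hpq
      exact .rel _ _ ⟨u, u' * y, by simp [mul_assoc], by simp [mul_assoc]⟩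
  | refl p => exact .refl _
  | symm p q _ ih => exact .symm _ _ ih
  | trans p q r _ _ ih1 ih2 => exact .trans _ _ _ ih1 ih2

lemma eqvGen_mul_left {τ v : FreeMonoid α} {w x : FreeMonoid α}
    (h : Relation.EqvGen (Rw τ v) w x) (y : FreeMonoid α) :
    Relation.EqvGen (Rw τ v) (y * w) (y * x) := by
  induction h with
  | rel p q hpq =>
      obtain ⟨u, u', rfl, rfl⟩ := hpq
      exact .rel _ _ ⟨y * u, u', by simp [mul_assoc], by simp [mul_assoc]⟩
  | refl p => exact .refl _
  | symm p q _ ih => exact .symm _ _ ih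
  | trans p q r _ _ ih1 ih2 => exact .trans _ _ _ ih1 ih2

lemma diamond_aux {a b : α} (hab : a ≠ b) {n : ℕ} (hn : 1 < n)
    {τ v : FreeMonoid α} (hT : τ.toList = T a b n)
    {u1 w1 u2 w2 : FreeMonoid α}
    (heq : u1 * τ * w1 = u2 * τ * w2) (hlt : u1.length < u2.length) :
    ∃ d, Rw τ v (u1 * v * w1) d ∧ Rw τ v (u2 * v * w2) d := by
  have hlist : u1.toList ++ T a b n ++ w1.toList = u2.toList ++ T a b n ++ w2.toList := by
    have h3 := congrArg FreeMonoid.toList heq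
    simpa [FreeMonoid.toList_mul, hT] using h3
  obtain ⟨p, hp1, hp2⟩ := overlap_cases hab hn hlist hlt
  set M : FreeMonoid α := FreeMonoid.ofList p with hM
  have hu2 : u2 = u1 * τ * M := by
    apply FreeMonoid.toList.injective
    simp [FreeMonoid.toList_mul, hT, hM, FreeMonoid.toList_ofList, hp1]
  have hw1 : w1 = M * τ * w2 := by
    apply FreeMonoid.toList.injective
    simp [FreeMonoid.toList_mul, hT, hM, FreeMonoid.toList_ofList, hp2]
  refine ⟨u1 * v * (M * v * w2), ⟨u1 * v * M, w2, ?_, by simp [mul_assoc]⟩,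
    ⟨u1, M * v * w2, ?_, rfl⟩⟩
  · rw [hw1]; simp [mul_assoc]
  · rw [hu2]; simp [mul_assoc]

lemma diamond {a b : α} (hab : a ≠ b) {n : ℕ} (hn : 1 < n)
    {τ v : FreeMonoid α} (hT : τ.toList = T a b n) :
    ∀ t t1 t2, Rw τ v t t1 → Rw τ v t t2 →
      ∃ d, Relation.ReflGen (Rw τ v) t1 d ∧ Relation.ReflTransGen (Rw τ v) t2 d := by
  rintro t t1 t2 ⟨u1, w1, rfl, rfl⟩ ⟨u2, w2, heq, rfl⟩
  rcases lt_trichotomy u1.length u2.length with hc | hc | hc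
  · obtain ⟨d, h1, h2⟩ := diamond_aux hab hn hT (v := v) heq hc
    exact ⟨d, .single h1, .single h2⟩
  · have hlist : u1.toList ++ (τ.toList ++ w1.toList) = u2.toList ++ (τ.toList ++ w2.toList) := by
      have h3 := congrArg FreeMonoid.toList heq
      simpa [FreeMonoid.toList_mul, List.append_assoc] using h3
    obtain ⟨e1, e2⟩ := List.append_inj hlist hc
    have hu : u1 = u2 := FreeMonoid.toList.injective e1
    have hw : w1 = w2 := FreeMonoid.toList.injective (List.append_cancel_left e2)
    rw [hu, hw]
    exact ⟨u2 * v * w2, .refl, .refl⟩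
  · obtain ⟨d, h1, h2⟩ := diamond_aux hab hn hT (v := v) heq.symm hc
    exact ⟨d, .single h2, .single h1⟩

end WordAux

open WordAux in
/-- For `τ = aⁿbabⁿ` and `|v| < |τ|`, every word `t` has a unique `τ`-irreducible
canonical representative modulo the congruence generated by `τ ~ v`. -/
theorem word_unique_canonical_representative {α : Type*} (a b : α) (hab : a ≠ b)
    (n : ℕ) (hn : 1 < n)
    (τ : FreeMonoid α)
    (hτ : τ = (FreeMonoid.of a) ^ n * FreeMonoid.of b * FreeMonoid.of a * (FreeMonoid.of b) ^ n)
    (v : FreeMonoid α) (hv : v.length < τ.length) (t : FreeMonoid α) :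
    ∃! t' : FreeMonoid α,
      (conGen (fun x y => x = τ ∧ y = v)) t t' ∧ ¬ IsFactor τ t' := by
  have hT : τ.toList = T a b n := by
    simp [hτ, T, FreeMonoid.toList_mul, FreeMonoid.toList_of, toList_pow_of]
  -- the congruence as EqvGen of the rewriting relation
  have hRle : ∀ x y, Rw τ v x y → (conGen fun x y => x = τ ∧ y = v) x y := by
    rintro x y ⟨u, u', rfl, rfl⟩
    exact (conGen _).mul ((conGen _).mul ((conGen _).refl u)
      (ConGen.Rel.of τ v ⟨rfl, rfl⟩)) ((conGen _).refl u')
  have hRTle : ∀ x y, Relation.ReflTransGen (Rw τ v) x y →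
      (conGen fun x y => x = τ ∧ y = v) x y := by
    intro x y h
    induction h with
    | refl => exact (conGen _).refl _
    | tail _ hstep ih => exact (conGen _).trans ih (hRle _ _ hstep)
  let C : Con (FreeMonoid α) :=
    { r := Relation.EqvGen (Rw τ v)
      iseqv := Relation.EqvGen.is_equivalence _
      mul' := fun h1 h2 => .trans _ _ _ (eqvGen_mul_right h1 _) (eqvGen_mul_left h2 _) }
  have hCle : ∀ x y, (conGen fun x y => x = τ ∧ y = v) x y → Relation.EqvGen (Rw τ v) x y := by
    intro x y h
    refine Con.le_def.mp ((Con.conGen_le (c := C)).mpr ?_) h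
    rintro p q ⟨rfl, rfl⟩
    exact .rel _ _ ⟨1, 1, by simp, by simp⟩
  -- lengths decrease
  have hlenτ : τ.length = n + n + 2 := by
    have : τ.toList.length = (T a b n).length := by rw [hT]
    rwa [T_length] at this
  -- normalization
  have exists_nf : ∀ (N : ℕ) (w : FreeMonoid α), w.length < N →
      ∃ w', Relation.ReflTransGen (Rw τ v) w w' ∧ ¬ IsFactor τ w' := by
    intro N
    induction N with
    | zero => intro w hw; omega
    | succ N ih =>
        intro w hw
        by_cases hf : IsFactor τ w
        · obtain ⟨u, u', rfl⟩ := hf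
          have hlen : (u * v * u').length < (u * τ * u').length := by
            simp only [FreeMonoid.length_mul]; omega
          obtain ⟨w', h1, h2⟩ := ih (u * v * u') (by omega)
          exact ⟨w', .head ⟨u, u', rfl, rfl⟩ h1, h2⟩
        · exact ⟨w, .refl, hf⟩
  obtain ⟨t', hsteps, hirr⟩ := exists_nf (t.length + 1) t (by omega)
  have nostep : ∀ w, ¬ IsFactor τ w → ∀ c, ¬ Rw τ v w c := by
    rintro w hw c ⟨u, u', rfl, -⟩
    exact hw ⟨u, u', rfl⟩
  refine ⟨t', ⟨hRTle _ _ hsteps, hirr⟩, ?_⟩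
  rintro s ⟨hs, hsirr⟩
  have hE : Relation.EqvGen (Rw τ v) s t' :=
    .trans _ _ _ (.symm _ _ (hCle _ _ hs)) (hCle _ _ (hRTle _ _ hsteps))
  have hdia := diamond hab hn hT (v := v)
  have hequiv := Relation.equivalence_join_reflTransGen hdia
  have hJgen : ∀ x y, Relation.EqvGen (Rw τ v) x y →
      Relation.Join (Relation.ReflTransGen (Rw τ v)) x y := by
    intro x y h
    induction h with
    | rel p q hpq => exact ⟨q, .single hpq, .refl⟩
    | refl p => exact hequiv.refl p
    | symm p q _ ih => exact hequiv.symm ih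
    | trans p q r _ _ ih1 ih2 => exact hequiv.trans ih1 ih2
  have hJ := hJgen s t' hE
  obtain ⟨d, hsd, htd⟩ := hJ
  have hs_eq : s = d := by
    rcases hsd.cases_head with h | ⟨c, hc, -⟩
    · exact h
    · exact absurd hc (nostep s hsirr c)
  have ht_eq : t' = d := by
    rcases htd.cases_head with h | ⟨c, hc, -⟩
    · exact h
    · exact absurd hc (nostep t' hirr c)
  rw [hs_eq, ht_eq]
end

section
/- Let a, b be distinct letters of α, let n > 1, let τ = a^n · b · a · b^n, and let v be a word with |v| < |τ|. If t ~_{τ,v} t' and |t| < |τ|, then t = t' if and only if |t| = |t'|. -/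
namespace WordCongAux

open Relation List

variable {α : Type*}

/-- The word `aⁿ b a bⁿ` as a list. -/
def T (a b : α) (n : ℕ) : List α :=
  List.replicate n a ++ b :: a :: List.replicate n b

lemma T_length (a b : α) (n : ℕ) : (T a b n).length = 2 * n + 2 := by
  simp [T]; omega

lemma Tget_low (a b : α) (n i : ℕ) (h : i < n) : (T a b n)[i]? = some a := by
  rw [T, List.getElem?_append_left (by simpa using h), List.getElem?_replicate, if_pos h]

lemma Tget_mid (a b : α) (n i : ℕ) (h : n ≤ i) :
    (T a b n)[i]? = (b :: a :: List.replicate n b)[i - n]? := by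
  rw [T, List.getElem?_append_right (by simpa using h), List.length_replicate]

lemma Tget_n (a b : α) (n : ℕ) : (T a b n)[n]? = some b := by
  rw [Tget_mid a b n n le_rfl, Nat.sub_self]; rfl

lemma Tget_n1 (a b : α) (n : ℕ) : (T a b n)[n + 1]? = some a := by
  rw [Tget_mid a b n (n + 1) (by omega), Nat.add_sub_cancel_left]; simp

lemma Tget_high (a b : α) (n i : ℕ) (h1 : n + 1 < i) (h2 : i < 2 * n + 2) :
    (T a b n)[i]? = some b := by
  rw [Tget_mid a b n i (by omega)]
  obtain ⟨k, hk⟩ : ∃ k, i - n = k + 2 := ⟨i - n - 2, by omega⟩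
  rw [hk]
  simp only [List.getElem?_cons_succ, List.getElem?_replicate]
  rw [if_pos (by omega)]

/-- `T` has no nontrivial border. -/
lemma no_border (a b : α) (hab : a ≠ b) (n : ℕ) (hn : 1 < n) (m : ℕ)
    (hm0 : 0 < m) (hmL : m < 2 * n + 2)
    (h : (T a b n).take m = (T a b n).drop (2 * n + 2 - m)) : False := by
  set L := 2 * n + 2 with hL
  -- choose an index i < m with T[i] = a and T[L-m+i] = b
  obtain ⟨i, him, ha, hb⟩ :
      ∃ i, i < m ∧ (T a b n)[i]? = some a ∧ (T a b n)[(L - m) + i]? = some b := by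
    rcases lt_or_ge m (n + 1) with hm | hm
    · exact ⟨0, hm0, Tget_low a b n 0 (by omega),
        by rw [Nat.add_zero]; exact Tget_high a b n _ (by omega) (by omega)⟩
    rcases eq_or_lt_of_le hm with hm' | hm'
    · exact ⟨1, by omega, Tget_low a b n 1 (by omega),
        Tget_high a b n _ (by omega) (by omega)⟩
    · refine ⟨m - n - 2, by omega, Tget_low a b n _ (by omega), ?_⟩
      have : (L - m) + (m - n - 2) = n := by omega
      rw [this, Tget_n]
  have := congrArg (fun l : List α => l[i]?) h
  simp only [List.getElem?_take, if_pos him, List.getElem?_drop] at this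
  rw [ha, hb] at this
  exact hab (Option.some_injective _ this)

/-- Two occurrences of `T` in the same word are identical or disjoint. -/
lemma no_overlap (a b : α) (hab : a ≠ b) (n : ℕ) (hn : 1 < n)
    (u w u' w' : List α) (h : u ++ T a b n ++ w = u' ++ T a b n ++ w') :
    (u = u' ∧ w = w') ∨ u.length + (T a b n).length ≤ u'.length ∨
      u'.length + (T a b n).length ≤ u.length := by
  -- helper: a strict partial overlap is impossible
  have key : ∀ u w u' w' : List α, u ++ T a b n ++ w = u' ++ T a b n ++ w' →
      u.length < u'.length → u'.length < u.length + (T a b n).length → False := by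
    intro u w u' w' h hlt hover
    set k := u'.length - u.length with hk
    have hk0 : 0 < k := by omega
    have hkL : k < (T a b n).length := by omega
    -- drop u'.length from both sides
    have h2 : (T a b n).drop k ++ w = T a b n ++ w' := by
      have e1 := congrArg (List.drop u'.length) h
      rw [List.append_assoc, List.append_assoc, List.drop_left] at e1
      rw [show u'.length = u.length + k by omega, List.drop_append] at e1
      rwa [List.drop_eq_nil_of_le (show u.length ≤ u.length + k by omega), List.nil_append,
        Nat.add_sub_cancel_left, List.drop_append_of_le_length (le_of_lt hkL)] at e1
    -- take (L - k) of both sides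
    have h3 : (T a b n).drop k = (T a b n).take ((T a b n).length - k) := by
      have := congrArg (List.take ((T a b n).length - k)) h2
      rw [List.take_left' (by simp [List.length_drop])] at this
      rwa [List.take_append_of_le_length (by omega)] at this
    have hTL : (T a b n).length = 2 * n + 2 := T_length a b n
    have hLk : 2 * n + 2 - ((T a b n).length - k) = k := by omega
    refine no_border a b hab n hn ((T a b n).length - k) (by omega) (by omega) ?_
    rw [hLk]
    exact h3.symm
  rcases lt_trichotomy u.length u'.length with hlt | heq | hgt
  · by_cases hd : u.length + (T a b n).length ≤ u'.length
    · exact Or.inr (Or.inl hd)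
    · exact absurd (key u w u' w' h hlt (by omega)) id
  · left
    rw [List.append_assoc, List.append_assoc] at h
    obtain ⟨h1, h2⟩ := List.append_inj h heq
    exact ⟨h1, List.append_cancel_left h2⟩
  · by_cases hd : u'.length + (T a b n).length ≤ u.length
    · exact Or.inr (Or.inr hd)
    · exact absurd (key u' w' u w h.symm hgt (by omega)) id

/-- If the occurrences are disjoint, we can split off the middle part. -/
lemma decomp (a b : α) (n : ℕ) (u w u' w' : List α)
    (h : u ++ T a b n ++ w = u' ++ T a b n ++ w')
    (hle : u.length + (T a b n).length ≤ u'.length) :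
    ∃ mid, u' = (u ++ T a b n) ++ mid ∧ w = mid ++ T a b n ++ w' := by
  have hpre : (u ++ T a b n) <+: u' := by
    refine List.prefix_of_prefix_length_le ⟨w, ?_⟩ ⟨T a b n ++ w', rfl⟩ ?_
    · rw [List.append_assoc] at h ⊢; rw [h, List.append_assoc]
    · simpa using hle
  obtain ⟨mid, hmid⟩ := hpre
  refine ⟨mid, hmid.symm, ?_⟩
  rw [← hmid] at h
  simp only [List.append_assoc] at h
  have h4 := List.append_cancel_left (List.append_cancel_left h)
  rw [h4, List.append_assoc]

/-- The one-rule rewriting relation `T → V` on lists. -/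
def Rl (a b : α) (n : ℕ) (V : List α) (x y : List α) : Prop :=
  ∃ s s', x = s ++ T a b n ++ s' ∧ y = s ++ V ++ s'

lemma Rl_length (a b : α) (n : ℕ) (V : List α) (hV : V.length < (T a b n).length)
    {x y : List α} (h : Rl a b n V x y) : y.length < x.length := by
  obtain ⟨s, s', rfl, rfl⟩ := h
  simp only [List.length_append]
  omega

lemma rtg_length (a b : α) (n : ℕ) (V : List α) (hV : V.length < (T a b n).length)
    {x y : List α} (h : ReflTransGen (Rl a b n V) x y) : y.length ≤ x.length := by
  induction h with
  | refl => exact le_rfl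
  | tail _ hs ih => exact le_trans (le_of_lt (Rl_length a b n V hV hs)) ih

/-- Local confluence (in the strong form needed for `church_rosser`). -/
lemma local_confluence (a b : α) (hab : a ≠ b) (n : ℕ) (hn : 1 < n) (V : List α) :
    ∀ x y z, Rl a b n V x y → Rl a b n V x z →
      ∃ d, ReflGen (Rl a b n V) y d ∧ ReflTransGen (Rl a b n V) z d := by
  -- helper for the disjoint case (first occurrence left of the second)
  have disj : ∀ u w u' w' : List α, u ++ T a b n ++ w = u' ++ T a b n ++ w' →
      u.length + (T a b n).length ≤ u'.length →
      ∃ d, Rl a b n V (u ++ V ++ w) d ∧ Rl a b n V (u' ++ V ++ w') d := by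
    intro u w u' w' h hle
    obtain ⟨mid, hu', hw⟩ := decomp a b n u w u' w' h hle
    refine ⟨u ++ V ++ (mid ++ V ++ w'), ⟨u ++ V ++ mid, w', ?_, by simp only [List.append_assoc]⟩,
      ⟨u, mid ++ V ++ w', ?_, by simp only [List.append_assoc]⟩⟩
    · rw [hw]; simp only [List.append_assoc]
    · rw [hu']; simp only [List.append_assoc]
  intro x y z hy hz
  obtain ⟨u, u', hx1, hy1⟩ := hy
  obtain ⟨s, s', hx2, hz1⟩ := hz
  rw [hx1] at hx2
  rcases no_overlap a b hab n hn u u' s s' hx2 with ⟨rfl, rfl⟩ | hle | hle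
  · exact ⟨y, ReflGen.refl, by rw [hy1, hz1]⟩
  · obtain ⟨d, h1, h2⟩ := disj u u' s s' hx2 hle
    rw [← hy1] at h1; rw [← hz1] at h2
    exact ⟨d, ReflGen.single h1, ReflTransGen.single h2⟩
  · obtain ⟨d, h2, h1⟩ := disj s s' u u' hx2.symm hle
    rw [← hy1] at h1; rw [← hz1] at h2
    exact ⟨d, ReflGen.single h1, ReflTransGen.single h2⟩

lemma Rl_mul (a b : α) (n : ℕ) (V : List α) {x y : List α} (s s' : List α)
    (h : EqvGen (Rl a b n V) x y) :
    EqvGen (Rl a b n V) (s ++ x ++ s') (s ++ y ++ s') := by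
  induction h with
  | rel x y hxy =>
    obtain ⟨u, u', rfl, rfl⟩ := hxy
    exact EqvGen.rel _ _ ⟨s ++ u, u' ++ s', by simp, by simp⟩
  | refl x => exact EqvGen.refl _
  | symm x y _ ih => exact EqvGen.symm _ _ ih
  | trans x y z _ _ ih1 ih2 => exact EqvGen.trans _ _ _ ih1 ih2

/-- Main list-level statement. -/
lemma main_list (a b : α) (hab : a ≠ b) (n : ℕ) (hn : 1 < n) (V : List α)
    (hV : V.length < (T a b n).length) (t t' : List α)
    (hE : EqvGen (Rl a b n V) t t') (ht : t.length < (T a b n).length) :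
    t = t' ↔ t.length = t'.length := by
  constructor
  · rintro rfl; rfl
  · intro hlen
    have hcr := local_confluence a b hab n hn V
    have hjoin : Join (ReflTransGen (Rl a b n V)) t t' := by
      have hequiv := Relation.equivalence_join_reflTransGen hcr
      have : EqvGen (Join (ReflTransGen (Rl a b n V))) t t' :=
        hE.mono (fun x y hxy => ⟨y, ReflTransGen.single hxy, ReflTransGen.refl⟩)
      exact hequiv.eqvGen_iff.mp this
    obtain ⟨d, h1, h2⟩ := hjoin
    -- t is irreducible, so d = t
    have hirr : ∀ y, ¬ Rl a b n V t y := by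
      rintro y ⟨s, s', rfl, -⟩
      simp only [List.length_append] at ht
      omega
    have hd : d = t := by
      rcases h1.cases_head with h | ⟨c, hc, -⟩
      · exact h.symm
      · exact absurd hc (hirr c)
    rw [hd] at h2
    rcases h2.cases_head with h | ⟨c, hc, hct⟩
    · exact h.symm
    · exfalso
      have h1 := Rl_length a b n V hV hc
      have h2 := rtg_length a b n V hV hct
      omega

lemma toList_pow_of (a : α) (n : ℕ) :
    FreeMonoid.toList ((FreeMonoid.of a) ^ n) = List.replicate n a := by
  induction n with
  | zero => rfl
  | succ m ih =>
    rw [pow_succ, FreeMonoid.toList_mul, ih, FreeMonoid.toList_of,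
      List.replicate_succ']

end WordCongAux

/-- For `τ = aⁿbabⁿ`, `|v| < |τ|`: congruent words shorter than `τ` are equal iff
they have the same length. -/
theorem word_congruent_short_eq_iff_length {α : Type*} (a b : α) (hab : a ≠ b)
    (n : ℕ) (hn : 1 < n)
    (τ : FreeMonoid α)
    (hτ : τ = (FreeMonoid.of a) ^ n * FreeMonoid.of b * FreeMonoid.of a * (FreeMonoid.of b) ^ n)
    (v : FreeMonoid α) (hv : v.length < τ.length)
    (t t' : FreeMonoid α) (htt' : (conGen (fun x y => x = τ ∧ y = v)) t t')
    (ht : t.length < τ.length) :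
    t = t' ↔ t.length = t'.length := by
  open WordCongAux in
  have hτlist : FreeMonoid.toList τ = T a b n := by
    rw [hτ]
    simp only [FreeMonoid.toList_mul, toList_pow_of, FreeMonoid.toList_of, T]
    simp
  have hlen : ∀ x : FreeMonoid α, x.length = (FreeMonoid.toList x).length := fun _ => rfl
  -- the congruence with underlying relation `EqvGen Rl` on lists
  set E : FreeMonoid α → FreeMonoid α → Prop :=
    fun x y => Relation.EqvGen (Rl a b n (FreeMonoid.toList v))
      (FreeMonoid.toList x) (FreeMonoid.toList y) with hEdef
  have hequiv := Relation.EqvGen.is_equivalence (Rl a b n (FreeMonoid.toList v))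
  have hmul : ∀ w x y z : FreeMonoid α, E w x → E y z → E (w * y) (x * z) := by
    intro w x y z h1 h2
    simp only [hEdef, FreeMonoid.toList_mul]
    have e1 := Rl_mul a b n (FreeMonoid.toList v) [] (FreeMonoid.toList y) h1
    have e2 := Rl_mul a b n (FreeMonoid.toList v) (FreeMonoid.toList x) [] h2
    simp only [List.nil_append, List.append_nil] at e1 e2
    exact hequiv.trans e1 e2
  have hconE : ∀ x y, (conGen (fun x y => x = τ ∧ y = v)) x y → E x y := by
    intro x y hxy
    have hc := (Con.conGen_le
      (c := Con.mk ⟨E, ⟨fun x => hequiv.refl _, fun h => hequiv.symm h,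
        fun h1 h2 => hequiv.trans h1 h2⟩⟩ (fun {w x y z} h1 h2 => hmul w x y z h1 h2))).2
      (fun x y (hxy : x = τ ∧ y = v) => by
        obtain ⟨rfl, rfl⟩ := hxy
        exact Relation.EqvGen.rel _ _ ⟨[], [], by simp [hτlist], by simp⟩)
    exact hc hxy
  have hE : E t t' := hconE t t' htt'
  have hVlen : (FreeMonoid.toList v).length < (T a b n).length := by
    rw [← hτlist]; exact hv
  have htlen : (FreeMonoid.toList t).length < (T a b n).length := by
    rw [← hτlist]; exact ht
  have := main_list a b hab n hn (FreeMonoid.toList v) hVlen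
    (FreeMonoid.toList t) (FreeMonoid.toList t') hE htlen
  rw [hlen t, hlen t', ← this]
  exact ⟨fun h => by rw [h], fun h => FreeMonoid.toList.injective h⟩
end

section
/- Let τ ∈ FreeMagma (Option α) be a tree with |τ| ≥ 2 and let v be a tree with |v| < |τ|. If t ~_{τ,v} t' and |t| < |τ|, then t = t' if and only if |t| = |t'|. -/
attribute [local instance] Classical.propDecidable

lemma treeLen_mul {α : Type*} (a b : FreeMagma (Option α)) :
    treeLen (FreeMagma.mul a b) = treeLen a + treeLen b := rfl

lemma treeLen_of_le {α : Type*} (x : Option α) : treeLen (FreeMagma.of x) ≤ 1 := by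
  cases x <;> simp [treeLen]

lemma fm_sizeOf_pos {α : Type*} : ∀ t : FreeMagma (Option α), 0 < sizeOf t
  | .of x => by
      have : sizeOf (FreeMagma.of x) = 1 + sizeOf x := rfl
      omega
  | .mul a b => by
      have : sizeOf (FreeMagma.mul a b) = 1 + sizeOf a + sizeOf b := rfl
      omega

/-- Normal form: innermost replacement of `τ` by `v`. -/
noncomputable def nf {α : Type*} (τ v : FreeMagma (Option α)) :
    FreeMagma (Option α) → FreeMagma (Option α)
  | .of x => if FreeMagma.of x = τ then v else .of x
  | .mul a b => if FreeMagma.mul (nf τ v a) (nf τ v b) = τ then v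
      else FreeMagma.mul (nf τ v a) (nf τ v b)

lemma nf_mul {α : Type*} (τ v a b : FreeMagma (Option α)) :
    nf τ v (FreeMagma.mul a b) = if FreeMagma.mul (nf τ v a) (nf τ v b) = τ then v
      else FreeMagma.mul (nf τ v a) (nf τ v b) := rfl

lemma nf_eq_self_of_len {α : Type*} (τ v : FreeMagma (Option α)) :
    ∀ t, treeLen t < treeLen τ → nf τ v t = t
  | .of x, h => by
      rw [nf, if_neg]
      intro he; rw [← he] at h; exact lt_irrefl _ h
  | .mul a b, h => by
      rw [treeLen_mul] at h
      have ha : treeLen a < treeLen τ := by omega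
      have hb : treeLen b < treeLen τ := by omega
      rw [nf_mul, nf_eq_self_of_len τ v a ha, nf_eq_self_of_len τ v b hb, if_neg]
      intro he; rw [← he, treeLen_mul] at h
      omega

lemma nf_eq_self_of_sizeOf {α : Type*} (τ v : FreeMagma (Option α)) :
    ∀ t, sizeOf t < sizeOf τ → nf τ v t = t
  | .of x, h => by
      rw [nf, if_neg]
      intro he; rw [← he] at h; exact lt_irrefl _ h
  | .mul a b, h => by
      have hab : sizeOf (FreeMagma.mul a b) = 1 + sizeOf a + sizeOf b := rfl
      have ha0 := fm_sizeOf_pos a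
      have hb0 := fm_sizeOf_pos b
      have ha : sizeOf a < sizeOf τ := by omega
      have hb : sizeOf b < sizeOf τ := by omega
      rw [nf_mul, nf_eq_self_of_sizeOf τ v a ha, nf_eq_self_of_sizeOf τ v b hb, if_neg]
      intro he; rw [← he] at h
      exact lt_irrefl _ h

lemma nf_tau {α : Type*} (τ v : FreeMagma (Option α)) (hτ : 2 ≤ treeLen τ) :
    nf τ v τ = v := by
  cases τ with
  | of x => exact absurd (le_trans hτ (treeLen_of_le x)) (by norm_num)
  | mul a b =>
      have hab : sizeOf (FreeMagma.mul a b) = 1 + sizeOf a + sizeOf b := rfl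
      have ha0 := fm_sizeOf_pos a
      have hb0 := fm_sizeOf_pos b
      rw [nf_mul, nf_eq_self_of_sizeOf _ v a (by omega), nf_eq_self_of_sizeOf _ v b (by omega),
        if_pos rfl]

lemma nf_len {α : Type*} (τ v : FreeMagma (Option α)) (hv : treeLen v < treeLen τ) :
    ∀ t, treeLen (nf τ v t) ≤ treeLen t ∧ (nf τ v t ≠ t → treeLen (nf τ v t) < treeLen t)
  | .of x => by
      rcases eq_or_ne (FreeMagma.of x) τ with he | he
      · rw [nf, if_pos he, he]
        exact ⟨le_of_lt hv, fun _ => hv⟩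
      · rw [nf, if_neg he]
        exact ⟨le_rfl, fun h => absurd rfl h⟩
  | .mul a b => by
      obtain ⟨ha, ha'⟩ := nf_len τ v hv a
      obtain ⟨hb, hb'⟩ := nf_len τ v hv b
      rw [nf_mul, treeLen_mul]
      split_ifs with h
      · have : treeLen (nf τ v a) + treeLen (nf τ v b) = treeLen τ := by
          have := congrArg treeLen h
          rwa [treeLen_mul] at this
        constructor
        · omega
        · intro _; omega
      · rw [treeLen_mul]
        constructor
        · omega
        · intro hne
          have : nf τ v a ≠ a ∨ nf τ v b ≠ b := by
            by_contra hc
            push_neg at hc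
            exact hne (by rw [hc.1, hc.2])
          rcases this with h1 | h1
          · have := ha' h1; omega
          · have := hb' h1; omega

/-- The congruence given by equality of normal forms. -/
noncomputable def nfCon {α : Type*} (τ v : FreeMagma (Option α)) :
    Con (FreeMagma (Option α)) where
  r x y := nf τ v x = nf τ v y
  iseqv := ⟨fun _ => rfl, Eq.symm, Eq.trans⟩
  mul' := by
    intro a b c d h1 h2
    have h1' : nf τ v a = nf τ v b := h1
    have h2' : nf τ v c = nf τ v d := h2
    show nf τ v (FreeMagma.mul a c) = nf τ v (FreeMagma.mul b d)
    rw [nf_mul, nf_mul, h1', h2']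

/-- For a tree `τ` with `|τ| ≥ 2`, `|v| < |τ|`: congruent trees shorter than `τ` are
equal iff they have the same length. -/
theorem tree_congruent_short_eq_iff_length {α : Type*}
    (τ : FreeMagma (Option α)) (hτ : 2 ≤ treeLen τ)
    (v : FreeMagma (Option α)) (hv : treeLen v < treeLen τ)
    (t t' : FreeMagma (Option α)) (htt' : (conGen (fun x y => x = τ ∧ y = v)) t t')
    (ht : treeLen t < treeLen τ) :
    t = t' ↔ treeLen t = treeLen t' := by
  constructor
  · rintro rfl; rfl
  · intro hlen
    have hle : conGen (fun x y => x = τ ∧ y = v) ≤ nfCon τ v := by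
      apply Con.conGen_le.2
      rintro x y ⟨hx, hy⟩
      show nf τ v x = nf τ v y
      rw [hx, hy, nf_tau τ v hτ, nf_eq_self_of_len τ v v hv]
    have hnf : nf τ v t = nf τ v t' := hle htt'
    rw [nf_eq_self_of_len τ v t ht] at hnf
    rcases eq_or_ne (nf τ v t') t' with he | he
    · rw [← he, ← hnf]
    · have := (nf_len τ v hv t').2 he
      rw [← hnf] at this
      omega
end

section
/- Let α have at least two distinct letters and let P, Q ∈ FreeMonoid (α ⊕ Fin n) be polynomials with the same multidegree, i.e. for each i the number of occurrences of Sum.inr i in P equals that in Q. If for every assignment u : Fin n → α of single letters the polynomial functions of P and Q agree (substituting the one-letter word u i for the variable Sum.inr i), then P = Q. -/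
/-- Number of occurrences of the variable `Sum.inr i` in the polynomial `P`. -/
def varCount {α : Type*} {n : ℕ} (i : Fin n) (P : FreeMonoid (α ⊕ Fin n)) : ℕ :=
  ((FreeMonoid.toList P).filterMap Sum.getRight?).count i

/-- Two word polynomials with the same multidegree whose polynomial functions agree on
all tuples of single letters are equal. -/
theorem word_polynomials_eq_of_agree_on_letters {α : Type*} (a b : α) (hab : a ≠ b)
    {n : ℕ} (P Q : FreeMonoid (α ⊕ Fin n))
    (hdeg : ∀ i, varCount i P = varCount i Q)
    (h : ∀ u : Fin n → α,
      FreeMonoid.lift (Sum.elim FreeMonoid.of (fun i => FreeMonoid.of (u i))) P =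
      FreeMonoid.lift (Sum.elim FreeMonoid.of (fun i => FreeMonoid.of (u i))) Q) :
    P = Q := by
  have key : ∀ x y : α ⊕ Fin n,
      (∀ u : Fin n → α, Sum.elim id u x = Sum.elim id u y) → x = y := by
    rintro (c | i) (d | j) hu
    · simpa using hu fun _ => a
    · exfalso
      rcases eq_or_ne c a with rfl | hc
      · have := hu fun _ => b
        simp at this
        exact hab this
      · have := hu fun _ => a
        simp at this
        exact hc this
    · exfalso
      rcases eq_or_ne d a with rfl | hd
      · have := hu fun _ => b
        simp at this
        exact hab this.symm
      · have := hu fun _ => a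
        simp at this
        exact hd this.symm
    · rcases eq_or_ne i j with rfl | hij
      · rfl
      · exfalso
        have := hu fun k => if k = i then a else b
        simp [hij, Ne.symm hij] at this
        exact hab this
  have h' : ∀ u : Fin n → α,
      List.map (Sum.elim id u) P.toList = List.map (Sum.elim id u) Q.toList := by
    intro u
    have e : (Sum.elim FreeMonoid.of (fun i => FreeMonoid.of (u i)) : α ⊕ Fin n → FreeMonoid α)
        = fun x => FreeMonoid.of (Sum.elim id u x) := by
      funext x; cases x <;> rfl
    have := h u
    rw [e, FreeMonoid.lift_of_comp_eq_map] at this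
    have := congrArg FreeMonoid.toList this
    simpa [FreeMonoid.toList_map] using this
  have hlen : P.toList.length = Q.toList.length := by
    have := congrArg List.length (h' fun _ => a)
    simpa using this
  have : P.toList = Q.toList := by
    apply List.ext_getElem hlen
    intro k hk hk'
    apply key
    intro u
    have hk2 : k < (List.map (Sum.elim id u) P.toList).length := by simpa using hk
    have := List.getElem_of_eq (h' u) hk2
    simpa using this
  exact FreeMonoid.toList.injective this
end

section
/- Let a, b be distinct letters of α, let n > 1, let τ = a^n · b · a · b^n, and let v be a word with |v| < |τ|. Let w be a nonempty word with |w| ≥ |τ| such that τ is not a factor of w and such that τ and w do not overlap, i.e. there do not exist words u, t', t with t nonempty and t ≠ τ such that either (w = u·t and τ = t·t') or (τ = t'·t and w = t·u). Then for every word s having w as a factor and every τ-irreducible word s' with s' ~_{τ,v} s, w is a factor of s'. -/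
section Border
variable {α : Type*}

lemma tau_get (a b : α) (n i : ℕ) (h : i < 2*n+2) :
    (List.replicate n a ++ b :: a :: List.replicate n b)[i]'(by
      simp [List.length_replicate]; omega) =
    if i < n ∨ i = n + 1 then a else b := by
  rcases lt_or_ge i n with hi | hi
  · rw [List.getElem_append_left (by simpa using hi)]
    simp [hi]
  · rw [List.getElem_append_right (by simpa using hi)]
    simp only [List.length_replicate]
    obtain ⟨j, rfl⟩ : ∃ j, i = n + j := ⟨i - n, by omega⟩
    have hj : n + j - n = j := by omega
    simp only [hj]
    match j with
    | 0 => simp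
    | 1 => simp
    | (k+2) =>
      simp only [List.getElem_cons_succ, List.getElem_replicate]
      have : ¬ (n + (k+2) < n ∨ n + (k+2) = n + 1) := by omega
      simp [this]

/-- τ = aⁿbabⁿ has no nontrivial border. -/
lemma tau_no_border (a b : α) (hab : a ≠ b) (n : ℕ) (hn : 1 < n)
    (k k₂ k₃ : List α)
    (h1 : List.replicate n a ++ b :: a :: List.replicate n b = k ++ k₂)
    (h2 : List.replicate n a ++ b :: a :: List.replicate n b = k₂ ++ k₃) :
    k₂ = [] ∨ k₂ = List.replicate n a ++ b :: a :: List.replicate n b := by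
  set τ : List α := List.replicate n a ++ b :: a :: List.replicate n b with hτ
  have hlen : τ.length = 2*n+2 := by simp [hτ]; omega
  by_contra hcon
  push_neg at hcon
  obtain ⟨h0, hne⟩ := hcon
  have hk2 : 0 < k₂.length := by
    cases k₂ <;> simp_all
  have hd : 0 < k.length := by
    rcases Nat.eq_zero_or_pos k.length with h | h
    · have hk : k = [] := List.length_eq_zero_iff.mp h
      subst hk; simp at h1; exact absurd h1.symm hne
    · exact h
  have hsum : k.length + k₂.length = 2*n+2 := by
    have := congrArg List.length h1; simp at this; omega
  set d := k.length with hdd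
  -- periodicity: ∀ i < k₂.length, τ[i] = τ[d+i]
  have per : ∀ i, i < k₂.length →
      (if i < n ∨ i = n + 1 then a else b) = (if d+i < n ∨ d+i = n + 1 then a else b) := by
    intro i hi
    have e1 : τ[i]'(by omega) = k₂[i]'hi := by
      rw [List.getElem_of_eq h2]; exact List.getElem_append_left hi
    have e2 : τ[d+i]'(by omega) = k₂[i]'hi := by
      rw [List.getElem_of_eq h1, List.getElem_append_right (by omega)]
      congr 1; omega
    have := e1.trans e2.symm
    rwa [tau_get a b n i (by omega), tau_get a b n (d+i) (by omega)] at this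
  -- case analysis on d
  rcases Nat.lt_or_ge d (n+1) with hdn | hdn
  · -- d ≤ n : i = n - d
    have := per (n - d) (by omega)
    have h1' : n - d < n ∨ n - d = n+1 := Or.inl (by omega)
    have h2' : ¬ (d + (n-d) < n ∨ d + (n-d) = n+1) := by omega
    simp only [if_pos h1', if_neg h2'] at this
    exact hab this
  rcases Nat.eq_or_lt_of_le hdn with hdn1 | hdn2
  · -- d = n+1 : i = 1
    have := per 1 (by omega)
    have h1' : 1 < n ∨ 1 = n+1 := Or.inl (by omega)
    have h2' : ¬ (d + 1 < n ∨ d + 1 = n+1) := by omega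
    simp only [if_pos h1', if_neg h2'] at this
    exact hab this
  · -- d ≥ n+2 : i = 2n+1-d
    have := per (2*n+1-d) (by omega)
    have h1' : 2*n+1-d < n ∨ 2*n+1-d = n+1 := Or.inl (by omega)
    have h2' : ¬ (d + (2*n+1-d) < n ∨ d + (2*n+1-d) = n+1) := by omega
    simp only [if_pos h1', if_neg h2'] at this
    exact hab this

end Border

section Rewrite
variable {α : Type*}

/-- one rewriting step replacing τ by v -/
def StepL (τ v : List α) (x y : List α) : Prop :=
  ∃ u u' : List α, x = u ++ τ ++ u' ∧ y = u ++ v ++ u'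

/-- helper: one-sided analysis of two τ-occurrences -/
lemma tau_tau_aux {τ : List α}
    (hbf : ∀ k k₂ k₃ : List α, τ = k ++ k₂ → τ = k₂ ++ k₃ → k₂ = [] ∨ k₂ = τ)
    {l₁ r₁ l₂ r₂ k : List α} (hl : l₂ = l₁ ++ k) (hr : τ ++ r₁ = k ++ (τ ++ r₂)) :
    (l₁ = l₂ ∧ r₁ = r₂) ∨ (∃ m, l₂ = l₁ ++ τ ++ m ∧ r₁ = m ++ τ ++ r₂) := by
  rcases List.append_eq_append_iff.mp hr with ⟨a', ha1, ha2⟩ | ⟨c', hc1, hc2⟩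
  · right; exact ⟨a', by simp [hl, ha1, List.append_assoc], by simpa [List.append_assoc] using ha2⟩
  · rcases List.append_eq_append_iff.mp hc2 with ⟨a', hb1, hb2⟩ | ⟨c₂, hd1, hd2⟩
    · -- τ = k ++ c', c' = τ ++ a'
      have hk : k = [] ∧ a' = [] := by
        have := congrArg List.length hc1
        rw [hb1] at this; simp only [List.length_append] at this
        constructor <;> [exact List.length_eq_zero_iff.mp (by omega);
          exact List.length_eq_zero_iff.mp (by omega)]
      obtain ⟨hk1, hk2⟩ := hk
      subst hk1 hk2
      left
      refine ⟨by simpa using hl.symm, ?_⟩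
      simp at hb2
      simp at hb1
      -- hb1 : c' = τ, hc2 : τ ++ r₂ = c' ++ r₁
      rw [hb1] at hc2
      exact (List.append_cancel_left hc2).symm
    · -- τ = k ++ c', τ = c' ++ c₂ : border
      rcases hbf k c' c₂ hc1 hd1 with h0 | hτ
      · -- c' = []
        subst h0
        simp only [List.append_nil] at hc1
        simp only [List.nil_append] at hd1
        right
        exact ⟨[], by simp [hl, ← hc1], by simp [hd2, ← hd1]⟩
      · -- c' = τ
        subst hτ
        have hk : k = [] := by
          have h' := congrArg List.length hc1
          simp only [List.length_append] at h'
          exact List.length_eq_zero_iff.mp (by omega)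
        have hc : c₂ = [] := by
          have h' := congrArg List.length hd1
          simp only [List.length_append] at h'
          exact List.length_eq_zero_iff.mp (by omega)
        subst hk hc
        left
        exact ⟨by simpa using hl.symm, by simpa using hd2⟩

end Rewrite

section Rewrite2
variable {α : Type*}

lemma tau_tau_occ {τ : List α}
    (hbf : ∀ k k₂ k₃ : List α, τ = k ++ k₂ → τ = k₂ ++ k₃ → k₂ = [] ∨ k₂ = τ)
    {l₁ r₁ l₂ r₂ : List α} (h : l₁ ++ τ ++ r₁ = l₂ ++ τ ++ r₂) :
    (l₁ = l₂ ∧ r₁ = r₂) ∨ (∃ m, l₂ = l₁ ++ τ ++ m ∧ r₁ = m ++ τ ++ r₂) ∨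
      (∃ m, l₁ = l₂ ++ τ ++ m ∧ r₂ = m ++ τ ++ r₁) := by
  have h' : l₁ ++ (τ ++ r₁) = l₂ ++ (τ ++ r₂) := by simpa [List.append_assoc] using h
  rcases List.append_eq_append_iff.mp h' with ⟨k, hk1, hk2⟩ | ⟨k, hk1, hk2⟩
  · rcases tau_tau_aux hbf hk1 hk2 with h0 | h1
    · exact Or.inl h0
    · exact Or.inr (Or.inl h1)
  · rcases tau_tau_aux hbf hk1 hk2 with ⟨h0, h0'⟩ | h1
    · exact Or.inl ⟨h0.symm, h0'.symm⟩
    · exact Or.inr (Or.inr h1)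

/-- occurrences of `w` and `τ` in the same word are disjoint -/
lemma w_tau_occ {τ w : List α}
    (hwlen : τ.length ≤ w.length)
    (hwirr : ∀ u u' : List α, w ≠ u ++ τ ++ u')
    (hov1 : ∀ u t t' : List α, t ≠ [] → t ≠ τ → ¬(w = u ++ t ∧ τ = t ++ t'))
    (hov2 : ∀ u t t' : List α, t ≠ [] → t ≠ τ → ¬(τ = t' ++ t ∧ w = t ++ u))
    {l₁ r₁ l₂ r₂ : List α} (h : l₁ ++ w ++ r₁ = l₂ ++ τ ++ r₂) :
    (∃ m, l₂ = l₁ ++ w ++ m ∧ r₁ = m ++ τ ++ r₂) ∨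
      (∃ m, l₁ = l₂ ++ τ ++ m ∧ r₂ = m ++ w ++ r₁) := by
  have h' : l₁ ++ (w ++ r₁) = l₂ ++ (τ ++ r₂) := by simpa [List.append_assoc] using h
  rcases List.append_eq_append_iff.mp h' with ⟨k, hk1, hk2⟩ | ⟨k, hk1, hk2⟩
  · -- l₂ = l₁ ++ k, w ++ r₁ = k ++ (τ ++ r₂)
    rcases List.append_eq_append_iff.mp hk2 with ⟨a', ha1, ha2⟩ | ⟨c', hc1, hc2⟩
    · exact Or.inl ⟨a', by simp [hk1, ha1, List.append_assoc],
        by simpa [List.append_assoc] using ha2⟩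
    · -- w = k ++ c', τ ++ r₂ = c' ++ r₁
      rcases List.append_eq_append_iff.mp hc2 with ⟨a', hb1, hb2⟩ | ⟨c₂, hd1, hd2⟩
      · -- c' = τ ++ a' : τ is a factor of w
        exact absurd (by rw [hc1, hb1, ← List.append_assoc]) (hwirr k a')
      · -- τ = c' ++ c₂, i.e. c' is a suffix of w and a prefix of τ
        by_cases h0 : c' = []
        · subst h0
          simp only [List.append_nil] at hc1
          simp only [List.nil_append] at hd1
          exact Or.inl ⟨[], by simp [hk1, hc1], by simp [hd2, ← hd1]⟩
        · by_cases hτ' : c' = τ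
          · exact absurd (by rw [hc1, hτ']; simp) (hwirr k [])
          · exact absurd ⟨hc1, hd1⟩ (hov1 k c' c₂ h0 hτ')
  · -- l₁ = l₂ ++ k, τ ++ r₂ = k ++ (w ++ r₁)
    rcases List.append_eq_append_iff.mp hk2 with ⟨a', ha1, ha2⟩ | ⟨c', hc1, hc2⟩
    · exact Or.inr ⟨a', by simp [hk1, ha1, List.append_assoc],
        by simpa [List.append_assoc] using ha2⟩
    · -- τ = k ++ c', w ++ r₁ = c' ++ r₂
      rcases List.append_eq_append_iff.mp hc2 with ⟨a', hb1, hb2⟩ | ⟨c₂, hd1, hd2⟩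
      · -- c' = w ++ a' : w is a factor of τ, forces w = τ
        have hlen := congrArg List.length hc1
        rw [hb1] at hlen
        simp only [List.length_append] at hlen
        have hk0 : k = [] := List.length_eq_zero_iff.mp (by omega)
        have ha0 : a' = [] := List.length_eq_zero_iff.mp (by omega)
        subst hk0; subst ha0
        simp only [List.nil_append, List.append_nil] at hc1 hb1
        rw [hb1] at hc1
        exact absurd (by simpa using hc1.symm) (hwirr [] [])
      · -- w = c' ++ c₂, i.e. c' is a prefix of w and a suffix of τ
        by_cases h0 : c' = []
        · subst h0
          simp only [List.append_nil] at hc1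
          simp only [List.nil_append] at hd1
          exact Or.inr ⟨[], by simp [hk1, ← hc1], by simp [hd2, hd1]⟩
        · by_cases hτ' : c' = τ
          · subst hτ'
            exact absurd (by simpa using hd1) (hwirr [] c₂)
          · exact absurd ⟨hc1, hd1⟩ (hov2 c₂ c' k h0 hτ')

/-- a rewriting step preserves the property of containing `w` -/
lemma step_preserves {τ v w : List α}
    (hwlen : τ.length ≤ w.length)
    (hwirr : ∀ u u' : List α, w ≠ u ++ τ ++ u')
    (hov1 : ∀ u t t' : List α, t ≠ [] → t ≠ τ → ¬(w = u ++ t ∧ τ = t ++ t'))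
    (hov2 : ∀ u t t' : List α, t ≠ [] → t ≠ τ → ¬(τ = t' ++ t ∧ w = t ++ u))
    {x y : List α} (hst : StepL τ v x y) {l r : List α} (hx : x = l ++ w ++ r) :
    ∃ l' r', y = l' ++ w ++ r' := by
  obtain ⟨u, u', hx2, hy⟩ := hst
  have h : l ++ w ++ r = u ++ τ ++ u' := hx ▸ hx2
  rcases w_tau_occ hwlen hwirr hov1 hov2 h with ⟨m, hm1, _⟩ | ⟨m, hm1, hm2⟩
  · exact ⟨l, m ++ v ++ u', by simp [hy, hm1, List.append_assoc]⟩
  · exact ⟨u ++ v ++ m, r, by simp [hy, hm1, hm2, List.append_assoc]⟩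

/-- strong confluence of the rewriting system -/
lemma strong_conf {τ v : List α}
    (hbf : ∀ k k₂ k₃ : List α, τ = k ++ k₂ → τ = k₂ ++ k₃ → k₂ = [] ∨ k₂ = τ)
    {x y₁ y₂ : List α} (h1 : StepL τ v x y₁) (h2 : StepL τ v x y₂) :
    y₁ = y₂ ∨ ∃ z, StepL τ v y₁ z ∧ StepL τ v y₂ z := by
  obtain ⟨u₁, u₁', hx1, hy1⟩ := h1
  obtain ⟨u₂, u₂', hx2, hy2⟩ := h2
  have h : u₁ ++ τ ++ u₁' = u₂ ++ τ ++ u₂' := hx1 ▸ hx2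
  rcases tau_tau_occ hbf h with ⟨he1, he2⟩ | ⟨m, hm1, hm2⟩ | ⟨m, hm1, hm2⟩
  · left; rw [hy1, hy2, he1, he2]
  · right
    refine ⟨u₁ ++ v ++ m ++ v ++ u₂', ⟨u₁ ++ v ++ m, u₂', ?_, ?_⟩, ⟨u₁, m ++ v ++ u₂', ?_, ?_⟩⟩
    · simp [hy1, hm2, List.append_assoc]
    · simp [List.append_assoc]
    · simp [hy2, hm1, List.append_assoc]
    · simp [List.append_assoc]
  · right
    refine ⟨u₂ ++ v ++ m ++ v ++ u₁', ⟨u₂, m ++ v ++ u₁', ?_, ?_⟩, ⟨u₂ ++ v ++ m, u₁', ?_, ?_⟩⟩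
    · simp [hy1, hm1, List.append_assoc]
    · simp [List.append_assoc]
    · simp [hy2, hm2, List.append_assoc]
    · simp [List.append_assoc]

end Rewrite2

section Closure
variable {α : Type*} {τ v : List α}

open Relation

lemma rtg_append {x y x' y' : List α}
    (hx : ReflTransGen (StepL τ v) x x') (hy : ReflTransGen (StepL τ v) y y') :
    ReflTransGen (StepL τ v) (x ++ y) (x' ++ y') := by
  have h1 : ReflTransGen (StepL τ v) (x ++ y) (x' ++ y) := by
    refine ReflTransGen.lift (fun z => z ++ y) (fun a b ⟨u, u', ha, hb⟩ => ?_) _ _ hx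
    exact ⟨u, u' ++ y, by simp [ha, List.append_assoc], by simp [hb, List.append_assoc]⟩
  have h2 : ReflTransGen (StepL τ v) (x' ++ y) (x' ++ y') := by
    refine ReflTransGen.lift (fun z => x' ++ z) (fun a b ⟨u, u', ha, hb⟩ => ?_) _ _ hy
    exact ⟨x' ++ u, u', by simp [ha, List.append_assoc], by simp [hb, List.append_assoc]⟩
  exact h1.trans h2

lemma cr_cond (hbf : ∀ k k₂ k₃ : List α, τ = k ++ k₂ → τ = k₂ ++ k₃ → k₂ = [] ∨ k₂ = τ) :
    ∀ x y z : List α, StepL τ v x y → StepL τ v x z →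
      ∃ d, ReflGen (StepL τ v) y d ∧ ReflTransGen (StepL τ v) z d := by
  intro x y z h1 h2
  rcases strong_conf hbf h1 h2 with rfl | ⟨d, hd1, hd2⟩
  · exact ⟨y, ReflGen.refl, ReflTransGen.refl⟩
  · exact ⟨d, ReflGen.single hd1, ReflTransGen.single hd2⟩

lemma rtg_preserves {w : List α}
    (hwlen : τ.length ≤ w.length)
    (hwirr : ∀ u u' : List α, w ≠ u ++ τ ++ u')
    (hov1 : ∀ u t t' : List α, t ≠ [] → t ≠ τ → ¬(w = u ++ t ∧ τ = t ++ t'))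
    (hov2 : ∀ u t t' : List α, t ≠ [] → t ≠ τ → ¬(τ = t' ++ t ∧ w = t ++ u))
    {x y : List α} (h : ReflTransGen (StepL τ v) x y)
    (hx : ∃ l r, x = l ++ w ++ r) : ∃ l r, y = l ++ w ++ r := by
  induction h with
  | refl => exact hx
  | tail _ hst ih =>
    obtain ⟨l, r, hl⟩ := ih
    exact step_preserves hwlen hwirr hov1 hov2 hst hl

lemma rtg_irreducible {x y : List α} (hx : ∀ u u', x ≠ u ++ τ ++ u') (h : ReflTransGen (StepL τ v) x y) :
    y = x := by
  rcases h.cases_head with rfl | ⟨c, ⟨u, u', hc1, _⟩, _⟩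
  · rfl
  · exact absurd hc1 (hx u u')

/-- the join of the reflexive-transitive closure as a multiplicative congruence -/
def joinCon (τ v : List α)
    (hbf : ∀ k k₂ k₃ : List α, τ = k ++ k₂ → τ = k₂ ++ k₃ → k₂ = [] ∨ k₂ = τ) :
    Con (FreeMonoid α) where
  r x y := Join (ReflTransGen (StepL τ v)) x.toList y.toList
  iseqv := by
    have he := equivalence_join_reflTransGen (r := StepL τ v) (cr_cond (v := v) hbf)
    exact ⟨fun x => he.refl _, fun h => he.symm h, fun h1 h2 => he.trans h1 h2⟩
  mul' := by
    rintro w x y z ⟨c, hwc, hxc⟩ ⟨d, hyd, hzd⟩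
    exact ⟨c ++ d, by rw [FreeMonoid.toList_mul]; exact rtg_append hwc hyd,
      by rw [FreeMonoid.toList_mul]; exact rtg_append hxc hzd⟩

end Closure

lemma toList_of_pow {α : Type*} (x : α) (n : ℕ) :
    FreeMonoid.toList (FreeMonoid.of x ^ n) = List.replicate n x := by
  induction n with
  | zero => rfl
  | succ k ih =>
    rw [pow_succ, FreeMonoid.toList_mul, ih, FreeMonoid.toList_of, List.replicate_succ']

lemma isFactor_iff {α : Type*} (w t : FreeMonoid α) :
    IsFactor w t ↔ ∃ u u' : List α, t.toList = u ++ w.toList ++ u' := by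
  constructor
  · rintro ⟨u, u', rfl⟩
    exact ⟨u.toList, u'.toList, by simp⟩
  · rintro ⟨u, u', h⟩
    refine ⟨FreeMonoid.ofList u, FreeMonoid.ofList u', FreeMonoid.toList.injective ?_⟩
    simpa using h
set_option linter.unusedVariables false in
/-- For `τ = aⁿbabⁿ` and `|v| < |τ|`: a nonempty τ-irreducible word `w` of length
at least `|τ|` which does not overlap with `τ` is strongly τ-irreducible: it remains
a factor of any τ-irreducible word congruent to a word containing it. -/
theorem word_strongly_irreducible {α : Type*} (a b : α) (hab : a ≠ b)
    (n : ℕ) (hn : 1 < n)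
    (τ : FreeMonoid α)
    (hτ : τ = (FreeMonoid.of a) ^ n * FreeMonoid.of b * FreeMonoid.of a * (FreeMonoid.of b) ^ n)
    (v : FreeMonoid α) (hv : v.length < τ.length)
    (w : FreeMonoid α) (hwne : w ≠ 1) (hwlen : τ.length ≤ w.length)
    (hwirr : ¬ IsFactor τ w)
    (hoverlap : ¬ ∃ u t' t : FreeMonoid α, t ≠ 1 ∧ t ≠ τ ∧
      ((w = u * t ∧ τ = t * t') ∨ (τ = t' * t ∧ w = t * u)))
    (s : FreeMonoid α) (hws : IsFactor w s)
    (s' : FreeMonoid α) (hs'irr : ¬ IsFactor τ s')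
    (hss' : (conGen (fun x y => x = τ ∧ y = v)) s' s) :
    IsFactor w s' := by
  classical
  set τL := FreeMonoid.toList τ with hτLd
  set vL := FreeMonoid.toList v with hvLd
  set wL := FreeMonoid.toList w with hwLd
  have hτL : τL = List.replicate n a ++ b :: a :: List.replicate n b := by
    rw [hτLd, hτ]
    simp [FreeMonoid.toList_mul, toList_of_pow, FreeMonoid.toList_of, List.append_assoc]
  have hbf : ∀ k k₂ k₃ : List α, τL = k ++ k₂ → τL = k₂ ++ k₃ → k₂ = [] ∨ k₂ = τL := by
    rw [hτL]
    exact fun k k₂ k₃ h1 h2 => tau_no_border a b hab n hn k k₂ k₃ h1 h2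
  have hwirrL : ∀ u u' : List α, wL ≠ u ++ τL ++ u' := by
    intro u u' h
    exact hwirr ((isFactor_iff τ w).mpr ⟨u, u', h⟩)
  have hwlenL : τL.length ≤ wL.length := hwlen
  have hov1 : ∀ u t t' : List α, t ≠ [] → t ≠ τL → ¬(wL = u ++ t ∧ τL = t ++ t') := by
    rintro u t t' ht0 htτ ⟨h1, h2⟩
    refine hoverlap ⟨FreeMonoid.ofList u, FreeMonoid.ofList t', FreeMonoid.ofList t,
      ?_, ?_, Or.inl ⟨?_, ?_⟩⟩
    · intro h; exact ht0 (by simpa using congrArg FreeMonoid.toList h)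
    · intro h; exact htτ (by simpa using congrArg FreeMonoid.toList h)
    · exact FreeMonoid.toList.injective (by simpa using h1)
    · exact FreeMonoid.toList.injective (by simpa using h2)
  have hov2 : ∀ u t t' : List α, t ≠ [] → t ≠ τL → ¬(τL = t' ++ t ∧ wL = t ++ u) := by
    rintro u t t' ht0 htτ ⟨h1, h2⟩
    refine hoverlap ⟨FreeMonoid.ofList u, FreeMonoid.ofList t', FreeMonoid.ofList t,
      ?_, ?_, Or.inr ⟨?_, ?_⟩⟩
    · intro h; exact ht0 (by simpa using congrArg FreeMonoid.toList h)
    · intro h; exact htτ (by simpa using congrArg FreeMonoid.toList h)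
    · exact FreeMonoid.toList.injective (by simpa using h1)
    · exact FreeMonoid.toList.injective (by simpa using h2)
  -- the generated congruence is contained in the joinability congruence
  have hle : conGen (fun x y => x = τ ∧ y = v) ≤ joinCon τL vL hbf := by
    apply Con.conGen_le.mpr
    rintro x y ⟨rfl, rfl⟩
    exact ⟨vL, Relation.ReflTransGen.single ⟨[], [], by simp [hτLd], by simp⟩,
      Relation.ReflTransGen.refl⟩
  have hJ : Relation.Join (Relation.ReflTransGen (StepL τL vL))
      (FreeMonoid.toList s') (FreeMonoid.toList s) := hle hss'
  obtain ⟨z, h1, h2⟩ := hJ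
  have hs'irrL : ∀ u u' : List α, FreeMonoid.toList s' ≠ u ++ τL ++ u' := by
    intro u u' h
    exact hs'irr ((isFactor_iff τ s').mpr ⟨u, u', h⟩)
  have hz : z = FreeMonoid.toList s' := rtg_irreducible hs'irrL h1
  obtain ⟨l, r, hl⟩ := (isFactor_iff w s).mp hws
  have hfin : ∃ l' r', z = l' ++ wL ++ r' :=
    rtg_preserves hwlenL hwirrL hov1 hov2 h2 ⟨l, r, hl⟩
  rw [hz] at hfin
  obtain ⟨l', r', hl'⟩ := hfin
  exact (isFactor_iff w s').mpr ⟨l', r', hl'⟩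
end

section
/- Let p ≥ 2 and let f : (Fin n → (Fin p → ℕ)) → (Fin p → ℕ) be congruence preserving on the additive monoid ℕ^p. Then there exists a tuple k : Fin n → ℕ such that for all u : Fin n → (Fin p → ℕ): (i) ∑_j (f u) j = ∑_j (f 0) j + ∑_i k i * (∑_j (u i) j), and (ii) for every j, (f u) j = (f 0) j + ∑_i k i * (u i) j, where 0 denotes the constant tuple of zero vectors. -/
/-- `f` is congruence preserving on the additive monoid `ℕ^p`. -/
def IsAddCP {p n : ℕ} (f : (Fin n → (Fin p → ℕ)) → (Fin p → ℕ)) : Prop :=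
  ∀ c : AddCon (Fin p → ℕ), ∀ u v : Fin n → (Fin p → ℕ),
    (∀ i, c (u i) (v i)) → c (f u) (f v)

private def Mcol {p n : ℕ} (j : Fin p) (a : Fin n → ℕ) : Fin n → Fin p → ℕ :=
  fun i l => if l = j then a i else 0

section aux

variable {p n : ℕ} {f : (Fin n → (Fin p → ℕ)) → (Fin p → ℕ)}

/-- coordinate congruence -/
private lemma cpA (hf : IsAddCP f) (j : Fin p) (u v : Fin n → Fin p → ℕ)
    (h : ∀ i, u i j = v i j) : f u j = f v j := by
  have := hf (AddCon.ker (Pi.evalAddMonoidHom (fun _ => ℕ) j)) u v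
    (fun i => (AddCon.ker_rel _).mpr (h i))
  exact (AddCon.ker_rel _).mp this

private def sumHom (p : ℕ) : (Fin p → ℕ) →+ ℕ where
  toFun v := ∑ j, v j
  map_zero' := by simp
  map_add' a b := Finset.sum_add_distrib

private lemma sumHom_apply {p : ℕ} (v : Fin p → ℕ) : sumHom p v = ∑ j, v j := rfl

/-- total-sum congruence -/
private lemma cpB (hf : IsAddCP f) (u v : Fin n → Fin p → ℕ)
    (h : ∀ i, ∑ j, u i j = ∑ j, v i j) : ∑ j, f u j = ∑ j, f v j := by
  have := hf (AddCon.ker (sumHom p)) u v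
    (fun i => (AddCon.ker_rel _).mpr (by rw [sumHom_apply, sumHom_apply]; exact h i))
  have h2 := (AddCon.ker_rel _).mp this
  rwa [sumHom_apply, sumHom_apply] at h2

private lemma repl (g h : Fin p → ℕ) (j : Fin p) (He : ∀ l, l ≠ j → g l = h l) :
    (∑ l, g l) + h j = (∑ l, h l) + g j := by
  have hg := (Finset.add_sum_erase Finset.univ g (Finset.mem_univ j)).symm
  have hh := (Finset.add_sum_erase Finset.univ h (Finset.mem_univ j)).symm
  have he : ∑ l ∈ Finset.univ.erase j, g l = ∑ l ∈ Finset.univ.erase j, h l :=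
    Finset.sum_congr rfl (fun l hl => He l (Finset.ne_of_mem_erase hl))
  omega

end aux

/-- Every CP function on `ℕ^p` (`p ≥ 2`) has a multidegree, affinely controlling both
the total sum of the value and each of its components. -/
theorem nat_pow_cp_multidegree {p n : ℕ} (hp : 2 ≤ p)
    (f : (Fin n → (Fin p → ℕ)) → (Fin p → ℕ)) (hf : IsAddCP f) :
    ∃ k : Fin n → ℕ,
      (∀ u : Fin n → (Fin p → ℕ),
        ∑ j, f u j = ∑ j, f (fun _ => 0) j + ∑ i, k i * ∑ j, u i j) ∧
      (∀ u : Fin n → (Fin p → ℕ), ∀ j,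
        f u j = f (fun _ => 0) j + ∑ i, k i * u i j) := by
  classical
  obtain ⟨j0, j1, hj01⟩ : ∃ j0 j1 : Fin p, j0 ≠ j1 :=
    ⟨⟨0, by omega⟩, ⟨1, by omega⟩, by simp [Fin.ext_iff]⟩
  set F0 : Fin p → ℕ := f (fun _ => 0) with hF0def
  set S : (Fin n → ℕ) → ℕ := fun a => ∑ l, f (Mcol j0 a) l with hSdef
  have McolCol : ∀ (j : Fin p) (a : Fin n → ℕ) (i : Fin n), Mcol j a i j = a i := by
    intro j a i; simp [Mcol]
  have McolColNe : ∀ (j l : Fin p), l ≠ j → ∀ (a : Fin n → ℕ) (i : Fin n),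
      Mcol j a i l = 0 := by
    intro j l hl a i; simp [Mcol, hl]
  have Mrow : ∀ (j : Fin p) (a : Fin n → ℕ) (i : Fin n), ∑ l, Mcol j a i l = a i := by
    intro j a i; simp [Mcol, Finset.sum_ite_eq']
  have hSindep : ∀ (j : Fin p) (a : Fin n → ℕ), ∑ l, f (Mcol j a) l = S a := by
    intro j a
    exact cpB hf _ _ (fun i => by rw [Mrow, Mrow])
  have hOff : ∀ (j : Fin p) (a : Fin n → ℕ) (l : Fin p), l ≠ j → f (Mcol j a) l = F0 l := by
    intro j a l hl
    rw [hF0def]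
    exact cpA hf l _ _ (fun i => by simp [Mcol, hl])
  have hS0 : S 0 = ∑ l, F0 l := by
    have h : Mcol j0 (0 : Fin n → ℕ) = (fun _ => 0 : Fin n → (Fin p → ℕ)) := by
      funext i l; simp [Mcol]
    show ∑ l, f (Mcol j0 (0 : Fin n → ℕ)) l = ∑ l, F0 l
    rw [h, hF0def]
  have hSsplit : ∀ (j : Fin p) (a : Fin n → ℕ), S a + F0 j = S 0 + f (Mcol j a) j := by
    intro j a
    have h1 := repl (f (Mcol j a)) F0 j (fun l hl => hOff j a l hl)
    have h2 := hSindep j a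
    omega
  -- Cauchy equation for S
  have hCauchy : ∀ a b : Fin n → ℕ, S (a + b) + S 0 = S a + S b := by
    intro a b
    set M : Fin n → Fin p → ℕ := Mcol j0 a + Mcol j1 b with hMdef
    have colj0 : ∀ i, M i j0 = a i := by
      intro i; simp [hMdef, Mcol, hj01, Ne.symm hj01]
    have colj1 : ∀ i, M i j1 = b i := by
      intro i; simp [hMdef, Mcol, hj01, Ne.symm hj01]
    have colOther : ∀ l, l ≠ j0 → l ≠ j1 → ∀ i, M i l = 0 := by
      intro l h0 h1 i; simp [hMdef, Mcol, h0, h1]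
    have e1 : ∀ l, l ≠ j1 → f M l = f (Mcol j0 a) l := by
      intro l hl
      refine cpA hf l _ _ (fun i => ?_)
      by_cases h : l = j0
      · subst h; rw [colj0, McolCol]
      · rw [colOther l h hl, McolColNe j0 l h]
    have e2 := repl (f M) (f (Mcol j0 a)) j1 e1
    have e3 : f (Mcol j0 a) j1 = F0 j1 := hOff j0 a j1 (Ne.symm hj01)
    have e4 : f M j1 = f (Mcol j1 b) j1 := by
      refine cpA hf j1 _ _ (fun i => ?_)
      rw [colj1, McolCol]
    have e5 : ∑ l, f M l = S (a + b) := by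
      have := cpB hf M (Mcol j0 (a + b)) (fun i => by
        rw [Mrow]
        have : ∑ l, M i l = ∑ l, (Mcol j0 a i l + Mcol j1 b i l) := rfl
        rw [this, Finset.sum_add_distrib, Mrow, Mrow]
        rfl)
      rw [this, hSindep]
    have e6 := hSsplit j1 b
    have e7 := hSindep j0 a
    omega
  -- the additive hom T a = S a - S 0
  set T : (Fin n → ℕ) →+ ℤ := AddMonoidHom.mk'
      (fun a => (S a : ℤ) - (S 0 : ℤ)) (by
    intro a b
    show (S (a + b) : ℤ) - (S 0 : ℤ) = ((S a : ℤ) - (S 0 : ℤ)) + ((S b : ℤ) - (S 0 : ℤ))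
    have := hCauchy a b
    omega) with hTdef
  have hTapp : ∀ a : Fin n → ℕ, T a = (S a : ℤ) - (S 0 : ℤ) := fun a => rfl
  have hsingle : ∀ (i : Fin n) (m : ℕ),
      (Pi.single i m : Fin n → ℕ) = m • (Pi.single i (1 : ℕ) : Fin n → ℕ) := by
    intro i m
    funext j
    by_cases h : j = i
    · subst h; simp
    · simp [Pi.single_eq_of_ne h]
  have hTsingle : ∀ a : Fin n → ℕ, T a = ∑ i, (a i : ℤ) * T (Pi.single i 1) := by
    intro a
    conv_lhs => rw [(Finset.univ_sum_single a).symm]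
    rw [map_sum]
    exact Finset.sum_congr rfl (fun i _ => by
      rw [hsingle i (a i), map_nsmul, nsmul_eq_mul])
  have hTnn : ∀ i, 0 ≤ T (Pi.single i 1) := by
    intro i
    by_contra h
    push_neg at h
    have ht : T (Pi.single i 1) ≤ -1 := by omega
    have h1 : T (Pi.single i (S 0 + 1)) = ((S 0 + 1 : ℕ) : ℤ) * T (Pi.single i 1) := by
      rw [hsingle i (S 0 + 1), map_nsmul, nsmul_eq_mul]
    have h2 : ((S 0 + 1 : ℕ) : ℤ) * T (Pi.single i 1) ≤ ((S 0 + 1 : ℕ) : ℤ) * (-1) := by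
      exact mul_le_mul_of_nonneg_left ht (by positivity)
    have h3 := hTapp (Pi.single i (S 0 + 1))
    have h4 : (0 : ℤ) ≤ (S (Pi.single i (S 0 + 1)) : ℤ) := Int.ofNat_nonneg _
    omega
  set k : Fin n → ℕ := fun i => (T (Pi.single i 1)).toNat with hkdef
  have hkcast : ∀ i, (k i : ℤ) = T (Pi.single i 1) := fun i => Int.toNat_of_nonneg (hTnn i)
  have hS : ∀ a : Fin n → ℕ, S a = S 0 + ∑ i, k i * a i := by
    intro a
    have h1 := hTsingle a
    rw [hTapp] at h1
    have h2 : (S a : ℤ) = (S 0 : ℤ) + ∑ i, (k i : ℤ) * (a i : ℤ) := by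
      rw [show (∑ i, (k i : ℤ) * (a i : ℤ)) = ∑ i, (a i : ℤ) * T (Pi.single i 1) from
        Finset.sum_congr rfl (fun i _ => by rw [hkcast, mul_comm])]
      omega
    exact_mod_cast h2
  have hcoord : ∀ (u : Fin n → (Fin p → ℕ)) (j : Fin p),
      f u j = F0 j + ∑ i, k i * u i j := by
    intro u j
    have h1 : f u j = f (Mcol j (fun i => u i j)) j :=
      cpA hf j _ _ (fun i => by rw [McolCol])
    have h2 := hSsplit j (fun i => u i j)
    have h3 := hS (fun i => u i j)
    omega
  refine ⟨k, ?_, fun u j => hcoord u j⟩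
  intro u
  calc ∑ j, f u j = ∑ j, (F0 j + ∑ i, k i * u i j) :=
        Finset.sum_congr rfl (fun j _ => hcoord u j)
    _ = (∑ j, F0 j) + ∑ j, ∑ i, k i * u i j := Finset.sum_add_distrib
    _ = (∑ j, F0 j) + ∑ i, k i * ∑ j, u i j := by
        rw [Finset.sum_comm]
        congr 1
        exact Finset.sum_congr rfl (fun i _ => (Finset.mul_sum _ _ _).symm)
end

section
/- Let p ≥ 2. The commutative monoid ℕ^p is affine complete: for every n and every congruence preserving function f : (Fin n → (Fin p → ℕ)) → (Fin p → ℕ) there exist c : Fin p → ℕ and k : Fin n → ℕ such that for all u, f u = c + ∑_i k i • u i. -/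
def cv {p : ℕ} (v : Fin p → ℕ) : AddCon (Fin p → ℕ) where
  r x y := ∃ m : ℤ, ∀ b, (x b : ℤ) - (y b : ℤ) = m * (v b : ℤ)
  iseqv := by
    refine ⟨fun x => ⟨0, by simp⟩, ?_, ?_⟩
    · rintro x y ⟨m, h⟩
      exact ⟨-m, fun b => by have := h b; rw [neg_mul]; linarith⟩
    · rintro x y z ⟨m, h⟩ ⟨m', h'⟩
      exact ⟨m + m', fun b => by have := h b; have := h' b; rw [add_mul]; linarith⟩
  add' := by
    rintro w x y z ⟨m, h⟩ ⟨m', h'⟩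
    refine ⟨m + m', fun b => ?_⟩
    have := h b; have := h' b
    simp only [Pi.add_apply] at *
    push_cast
    rw [add_mul]; linarith

def EE {p : ℕ} (a : Fin p) : Fin p → ℕ := fun b => if b = a then 1 else 0

def upd {p n : ℕ} (u : Fin n → Fin p → ℕ) (j : Fin n) (w : Fin p → ℕ) :
    Fin n → Fin p → ℕ := Function.update u j (u j + w)

lemma upd_same {p n : ℕ} (u : Fin n → Fin p → ℕ) (j : Fin n) (w : Fin p → ℕ) :
    upd u j w j = u j + w := Function.update_self j _ u

lemma upd_ne {p n : ℕ} (u : Fin n → Fin p → ℕ) (j : Fin n) (w : Fin p → ℕ)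
    {i : Fin n} (h : i ≠ j) : upd u j w i = u i := Function.update_of_ne h _ u

lemma upd_upd_same {p n : ℕ} (u : Fin n → Fin p → ℕ) (j : Fin n) (w w' : Fin p → ℕ) :
    upd (upd u j w) j w' = upd u j (w + w') := by
  unfold upd
  rw [Function.update_self, Function.update_idem, add_assoc]

lemma upd_comm {p n : ℕ} (u : Fin n → Fin p → ℕ) {i j : Fin n} (hij : i ≠ j)
    (w w' : Fin p → ℕ) : upd (upd u i w) j w' = upd (upd u j w') i w := by
  unfold upd
  rw [Function.update_of_ne hij.symm, Function.update_of_ne hij,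
    Function.update_comm hij]

section Main
variable {p n : ℕ} (f : (Fin n → (Fin p → ℕ)) → (Fin p → ℕ)) (hf : IsAddCP f)

include hf in
lemma key (v : Fin p → ℕ) (u : Fin n → Fin p → ℕ) (j : Fin n) :
    ∃ m : ℤ, ∀ b, (f (upd u j v) b : ℤ) - (f u b : ℤ) = m * (v b : ℤ) := by
  refine hf (cv v) (upd u j v) u fun i => ?_
  by_cases hij : i = j
  · subst hij
    exact ⟨1, fun b => by rw [upd_same]; simp⟩
  · exact ⟨0, fun b => by rw [upd_ne u j v hij]; simp⟩

/-- the diagonal change. -/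
def del (u : Fin n → Fin p → ℕ) (j : Fin n) (a : Fin p) : ℤ :=
  (f (upd u j (EE a)) a : ℤ) - (f u a : ℤ)

include hf in
lemma offdiag (u : Fin n → Fin p → ℕ) (j : Fin n) {a b : Fin p} (hba : b ≠ a) :
    (f (upd u j (EE a)) b : ℤ) = (f u b : ℤ) := by
  obtain ⟨m, hm⟩ := key f hf (EE a) u j
  have := hm b
  simp [EE, hba] at this
  linarith

lemma diag (u : Fin n → Fin p → ℕ) (j : Fin n) (a : Fin p) :
    (f (upd u j (EE a)) a : ℤ) = (f u a : ℤ) + del f u j a := by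
  unfold del; ring

include hf in
lemma pair (u : Fin n → Fin p → ℕ) (j : Fin n) {a b : Fin p} (hab : a ≠ b) :
    del f u j a = del f u j b ∧ del f (upd u j (EE a)) j b = del f u j a := by
  obtain ⟨m, hm⟩ := key f hf (EE a + EE b) u j
  have hu2 : upd u j (EE a + EE b) = upd (upd u j (EE a)) j (EE b) :=
    (upd_upd_same u j (EE a) (EE b)).symm
  have hu2' : upd u j (EE a + EE b) = upd (upd u j (EE b)) j (EE a) := by
    rw [upd_upd_same, add_comm]
  have ha := hm a
  have hb := hm b
  simp [EE, hab, hab.symm] at ha hb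
  -- ha : f (upd u j (EE a + EE b)) a - f u a = m, similarly hb at b
  have h1 : del f u j a = m := by
    rw [← ha, hu2, offdiag f hf (upd u j (EE a)) j hab]; rfl
  have h2 : del f u j b = m := by
    rw [← hb, hu2', offdiag f hf (upd u j (EE b)) j hab.symm]; rfl
  have h3 : del f (upd u j (EE a)) j b = m := by
    have hfb : (f (upd u j (EE a)) b : ℤ) = (f u b : ℤ) :=
      offdiag f hf u j hab.symm
    unfold del
    rw [hfb, ← hu2, hb]
  refine ⟨by rw [h1, h2], by rw [h1, h3]⟩

include hf in
lemma mixed (u : Fin n → Fin p → ℕ) {i j : Fin n} (hij : i ≠ j)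
    {a b : Fin p} (hab : a ≠ b) :
    del f (upd u i (EE a)) j b = del f u j b := by
  have hcom : upd (upd u i (EE a)) j (EE b) = upd (upd u j (EE b)) i (EE a) :=
    upd_comm u hij (EE a) (EE b)
  have e1 : (f (upd u i (EE a)) b : ℤ) = (f u b : ℤ) := offdiag f hf u i hab.symm
  have e2 : (f (upd (upd u i (EE a)) j (EE b)) b : ℤ)
      = (f (upd u j (EE b)) b : ℤ) := by
    rw [hcom]; exact offdiag f hf (upd u j (EE b)) i hab.symm
  unfold del
  rw [e1, e2]

include hf in
lemma const_coord (u : Fin n → Fin p → ℕ) (j : Fin n) (a b : Fin p) :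
    del f u j a = del f u j b := by
  rcases eq_or_ne a b with h | h
  · rw [h]
  · exact (pair f hf u j h).1

include hf in
lemma invariance (hp : 2 ≤ p) (u : Fin n → Fin p → ℕ) (i j : Fin n)
    (a b : Fin p) : del f (upd u i (EE a)) j b = del f u j b := by
  obtain ⟨b₀, hb₀⟩ : ∃ b₀ : Fin p, b₀ ≠ a := by
    rcases eq_or_ne a ⟨0, by omega⟩ with h | h
    · exact ⟨⟨1, by omega⟩, by rw [h]; simp [Fin.ext_iff]⟩
    · exact ⟨⟨0, by omega⟩, fun hc => h hc.symm⟩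
  rw [const_coord f hf _ j b b₀, const_coord f hf u j b b₀]
  rcases eq_or_ne i j with h | h
  · subst h
    rw [(pair f hf u i hb₀.symm).2, const_coord f hf u i a b₀]
  · exact mixed f hf u h hb₀.symm

lemma incr_induction {P : (Fin n → Fin p → ℕ) → Prop} (h0 : P 0)
    (hstep : ∀ u i a, P u → P (upd u i (EE a))) :
    ∀ u, P u := by
  have main : ∀ N : ℕ, ∀ u : Fin n → Fin p → ℕ,
      (∑ i, ∑ c, u i c) = N → P u := by
    intro N
    induction N using Nat.strong_induction_on with
    | _ N ih =>
      intro u hu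
      rcases Nat.eq_zero_or_pos N with h0' | hpos
      · have : u = 0 := by
          funext i c
          subst h0'
          have h1 : (∑ c, u i c) = 0 := by
            have := (Finset.sum_eq_zero_iff.mp hu) i (Finset.mem_univ i)
            exact this
          exact (Finset.sum_eq_zero_iff.mp h1) c (Finset.mem_univ c)
        rw [this]; exact h0
      · -- find a nonzero entry
        have : ∃ i c, u i c ≠ 0 := by
          by_contra hc
          push_neg at hc
          have : (∑ i, ∑ c, u i c) = 0 :=
            Finset.sum_eq_zero fun i _ => Finset.sum_eq_zero fun c _ => hc i c
          omega
        obtain ⟨i, c, hic⟩ := this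
        set u' : Fin n → Fin p → ℕ :=
          Function.update u i (fun d => u i d - EE c d) with hu'
        have hval : u' i + EE c = u i := by
          funext d
          simp only [hu', Function.update_self, Pi.add_apply]
          unfold EE
          rcases eq_or_ne d c with h | h
          · subst h; simp; omega
          · simp [h]
        have hrec : upd u' i (EE c) = u := by
          funext i'
          rcases eq_or_ne i' i with h | h
          · subst h; rw [upd_same, hval]
          · rw [upd_ne _ _ _ h, hu', Function.update_of_ne h]
        have hsum : (∑ i', ∑ d, u' i' d) = N - 1 := by
          have h1 : (∑ d, u' i d) = (∑ d, u i d) - 1 := by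
            have : ∀ d, u' i d = u i d - EE c d := by
              intro d; rw [hu', Function.update_self]
            calc (∑ d, u' i d) = ∑ d, (u i d - EE c d) := by
                  exact Finset.sum_congr rfl fun d _ => this d
              _ = (∑ d, u i d) - 1 := by
                  have h2 : (∑ d, EE c d) = 1 := by
                    unfold EE; rw [Finset.sum_ite_eq']; simp
                  have h3 : ∀ d, EE c d ≤ u i d := by
                    intro d; unfold EE
                    rcases eq_or_ne d c with h | h
                    · subst h; simp; omega
                    · simp [h]
                  rw [← h2]
                  exact Finset.sum_tsub_distrib Finset.univ fun d _ => h3 d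
          have h4 : 1 ≤ ∑ d, u i d :=
            Nat.one_le_iff_ne_zero.mpr fun hz =>
              hic ((Finset.sum_eq_zero_iff.mp hz) c (Finset.mem_univ c))
          calc (∑ i', ∑ d, u' i' d)
              = (∑ d, u' i d) + ∑ i' ∈ Finset.univ.erase i, ∑ d, u' i' d :=
                (Finset.add_sum_erase Finset.univ (fun i' => ∑ d, u' i' d)
                  (Finset.mem_univ i)).symm
            _ = ((∑ d, u i d) - 1) + ∑ i' ∈ Finset.univ.erase i, ∑ d, u i' d := by
                rw [h1]
                congr 1
                refine Finset.sum_congr rfl fun i' hi' => ?_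
                rw [hu', Function.update_of_ne (Finset.ne_of_mem_erase hi')]
            _ = N - 1 := by
                have : (∑ d, u i d) + ∑ i' ∈ Finset.univ.erase i, ∑ d, u i' d
                    = ∑ i', ∑ d, u i' d :=
                  Finset.add_sum_erase Finset.univ (fun i' => ∑ d, u i' d)
                    (Finset.mem_univ i)
                omega
        have := ih (N - 1) (by omega) u' hsum
        rw [← hrec]
        exact hstep u' i c this
  intro u
  exact main _ u rfl

include hf in
lemma del_const (hp : 2 ≤ p) (u : Fin n → Fin p → ℕ) (j : Fin n) (b : Fin p) :
    del f u j b = del f 0 j b := by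
  induction u using incr_induction with
  | h0 => rfl
  | hstep u i a ih => rw [invariance f hf hp u i j a b, ih]

include hf in
lemma stepk (hp : 2 ≤ p) (u : Fin n → Fin p → ℕ) (j : Fin n) (a b : Fin p) :
    (f (upd u j (EE a)) b : ℤ) - (f u b : ℤ)
      = del f 0 j ⟨0, by omega⟩ * (EE a b : ℤ) := by
  rcases eq_or_ne b a with h | h
  · subst h
    have : (f (upd u j (EE b)) b : ℤ) - (f u b : ℤ) = del f u j b := rfl
    rw [this, del_const f hf hp, const_coord f hf 0 j b ⟨0, by omega⟩]
    simp [EE]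
  · rw [offdiag f hf u j h]
    simp [EE, h]

include hf in
lemma formula (hp : 2 ≤ p) (u : Fin n → Fin p → ℕ) (b : Fin p) :
    (f u b : ℤ) = (f 0 b : ℤ)
      + ∑ j, del f 0 j ⟨0, by omega⟩ * (u j b : ℤ) := by
  induction u using incr_induction with
  | h0 => simp
  | hstep u i a ih =>
    have hstep := stepk f hf hp u i a b
    have hcomp : ∀ j : Fin n, ((upd u i (EE a)) j b : ℤ)
        = (u j b : ℤ) + (if j = i then (EE a b : ℤ) else 0) := by
      intro j
      rcases eq_or_ne j i with h | h
      · subst h; rw [upd_same]; simp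
      · rw [upd_ne _ _ _ h]; simp [h]
    calc (f (upd u i (EE a)) b : ℤ)
        = (f u b : ℤ) + del f 0 i ⟨0, by omega⟩ * (EE a b : ℤ) := by linarith
      _ = (f 0 b : ℤ) + ∑ j, del f 0 j ⟨0, by omega⟩ * ((upd u i (EE a)) j b : ℤ) := by
          rw [ih]
          have : ∑ j, del f 0 j ⟨0, by omega⟩ * ((upd u i (EE a)) j b : ℤ)
              = ∑ j, (del f 0 j ⟨0, by omega⟩ * (u j b : ℤ)
                + if j = i then del f 0 j ⟨0, by omega⟩ * (EE a b : ℤ) else 0) := by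
            refine Finset.sum_congr rfl fun j _ => ?_
            rw [hcomp j]
            rcases eq_or_ne j i with h | h
            · subst h; simp; ring
            · simp [h]
          rw [this, Finset.sum_add_distrib, Finset.sum_ite_eq' Finset.univ i
            (fun j => del f 0 j ⟨0, by omega⟩ * (EE a b : ℤ))]
          simp
          ring

include hf in
lemma knonneg (hp : 2 ≤ p) (j : Fin n) : 0 ≤ del f 0 j ⟨0, by omega⟩ := by
  by_contra hneg
  push_neg at hneg
  set b₀ : Fin p := ⟨0, by omega⟩
  set N : ℕ := f 0 b₀ + 1 with hN
  set u : Fin n → Fin p → ℕ :=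
    Function.update (0 : Fin n → Fin p → ℕ) j (fun c => if c = b₀ then N else 0) with hu
  have hform := formula f hf hp u b₀
  have hsum : ∑ j', del f 0 j' b₀ * (u j' b₀ : ℤ) = del f 0 j b₀ * N := by
    have : ∀ j', del f 0 j' b₀ * (u j' b₀ : ℤ)
        = if j' = j then del f 0 j b₀ * N else 0 := by
      intro j'
      rcases eq_or_ne j' j with h | h
      · subst h; rw [hu, Function.update_self]; simp
      · rw [hu, Function.update_of_ne h]; simp [h]
    rw [Finset.sum_congr rfl fun j' _ => this j', Finset.sum_ite_eq' Finset.univ j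
      (fun _ => del f 0 j b₀ * (N : ℤ))]
    simp
  rw [hsum] at hform
  have hge : (0 : ℤ) ≤ (f u b₀ : ℤ) := Int.natCast_nonneg _
  have hle : del f 0 j b₀ ≤ -1 := by omega
  have : del f 0 j b₀ * N ≤ -N := by
    have : (0 : ℤ) ≤ (N : ℤ) := Int.natCast_nonneg _
    nlinarith
  omega

end Main

/-- The free commutative monoid `ℕ^p` with `p ≥ 2` is affine complete. -/
theorem nat_pow_affineComplete {p : ℕ} (hp : 2 ≤ p) (n : ℕ)
    (f : (Fin n → (Fin p → ℕ)) → (Fin p → ℕ)) (hf : IsAddCP f) :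
    ∃ (c : Fin p → ℕ) (k : Fin n → ℕ), ∀ u : Fin n → (Fin p → ℕ),
      f u = c + ∑ i, k i • u i := by
  refine ⟨f 0, fun j => (del f 0 j ⟨0, by omega⟩).toNat, fun u => ?_⟩
  funext b
  have hform := formula f hf hp u b
  have hnn := fun j => knonneg f hf hp j
  have hcast : ∀ j : Fin n, ((del f 0 j ⟨0, by omega⟩).toNat : ℤ)
      = del f 0 j ⟨0, by omega⟩ := fun j => Int.toNat_of_nonneg (hnn j)
  have : ((f 0 b + ∑ j, (del f 0 j ⟨0, by omega⟩).toNat * u j b : ℕ) : ℤ)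
      = (f u b : ℤ) := by
    push_cast
    rw [hform]
    congr 1
    refine Finset.sum_congr rfl fun j _ => ?_
    rw [hcast j]
  have heq : f u b = f 0 b + ∑ j, (del f 0 j ⟨0, by omega⟩).toNat * u j b := by
    exact_mod_cast this.symm
  rw [heq]
  simp [Finset.sum_apply]
end

section
/- Let a, b be the two letters of the two-letter alphabet α = Fin 2, and define f : FreeMonoid α → FreeMonoid α by f(w) = a^{|w|_a} · b^{|w|_b}. Then f is not congruence preserving: there exists a multiplicative congruence c on FreeMonoid α and words u, v with c u v but ¬ c (f u) (f v). (A witness is the congruence relating two words iff they are both empty or have the same first letter.) -/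
/-- The congruence on the free monoid relating two words iff they have the same
(optional) first letter. -/
def headCon (α : Type*) : Con (FreeMonoid α) where
  r u v := (FreeMonoid.toList u).head? = (FreeMonoid.toList v).head?
  iseqv := ⟨fun _ => rfl, fun h => h.symm, fun h₁ h₂ => h₁.trans h₂⟩
  mul' := by
    intro u₁ u₂ v₁ v₂ hu hv
    show ((FreeMonoid.toList u₁) ++ (FreeMonoid.toList v₁)).head? =
      ((FreeMonoid.toList u₂) ++ (FreeMonoid.toList v₂)).head?
    rcases h₁ : FreeMonoid.toList u₁ with _ | ⟨x, l⟩
    · have h₂ : FreeMonoid.toList u₂ = [] := by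
        have := hu
        simp only [h₁] at this
        exact List.head?_eq_none_iff.mp this.symm
      simpa [h₁, h₂] using hv
    · rcases h₂ : FreeMonoid.toList u₂ with _ | ⟨y, l'⟩
      · exfalso
        have := hu
        simp [h₁, h₂] at this
      · have := hu
        simp only [h₁, h₂, List.head?] at this
        simp [this]

/-- The function `w ↦ a^{|w|_a} · b^{|w|_b}` on the free monoid over the two-letter
alphabet `Fin 2` (with `a = 0`, `b = 1`) is not congruence preserving. -/
theorem sort_function_not_cp (a b : Fin 2) (ha : a = 0) (hb : b = 1)
    (f : FreeMonoid (Fin 2) → FreeMonoid (Fin 2))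
    (hf : ∀ w : FreeMonoid (Fin 2),
      f w = (FreeMonoid.of a) ^ ((FreeMonoid.toList w).count a) *
            (FreeMonoid.of b) ^ ((FreeMonoid.toList w).count b)) :
    ∃ c : Con (FreeMonoid (Fin 2)), ∃ u v : FreeMonoid (Fin 2),
      c u v ∧ ¬ c (f u) (f v) := by
  subst ha hb
  refine ⟨headCon (Fin 2), FreeMonoid.of 1 * FreeMonoid.of 0, FreeMonoid.of 1, ?_, ?_⟩
  · show ((1 : Fin 2) :: [(0 : Fin 2)]).head? = [(1 : Fin 2)].head?
    rfl
  · rw [hf, hf]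
    show ¬ ((FreeMonoid.toList _).head? = (FreeMonoid.toList _).head?)
    have h1 : FreeMonoid.toList (FreeMonoid.of (1 : Fin 2) * FreeMonoid.of 0) = [1, 0] := rfl
    have h2 : FreeMonoid.toList (FreeMonoid.of (1 : Fin 2)) = [1] := rfl
    rw [h1, h2]
    decide
end
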